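/- Let N and M be quantum channels from M_d(ℂ) to M_{d'}(ℂ) with normalized Choi matrices J^N and J^M, and let ε ≥ 0. If F(J^N, J^M) ≥ 1 − ε, then ½‖N − M‖_⋄ ≤ d√ε. -/

import Mathlib

open scoped BigOperators Kronecker ComplexOrder
open Matrix Filter

noncomputable section

namespace DynEnt

/-- A (not necessarily linear) map between matrix spaces. -/
abbrev MatMap (ι₀ ι₁ : Type) : Type := Matrix ι₀ ι₀ ℂ → Matrix ι₁ ι₁ ℂ

/-- The map `L ⊗ id_ρ`, acting trivially on a reference system indexed by `ρ`. -/
def tensorIdT {ι₀ ι₁ ρ : Type} (L : MatMap ι₀ ι₁)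
    (X : Matrix (ι₀ × ρ) (ι₀ × ρ) ℂ) : Matrix (ι₁ × ρ) (ι₁ × ρ) ℂ :=
  Matrix.of fun p q => L (Matrix.of fun i j => X (i, p.2) (j, q.2)) p.1 q.1

def IsLinearFun {ι₀ ι₁ : Type} (L : MatMap ι₀ ι₁) : Prop :=
  ∀ (c : ℂ) (X Y : Matrix ι₀ ι₀ ℂ), L (c • X + Y) = c • L X + L Y

def IsCompletelyPositive {ι₀ ι₁ : Type} [Fintype ι₀] [Fintype ι₁] (L : MatMap ι₀ ι₁) : Prop :=
  ∀ (r : ℕ) (X : Matrix (ι₀ × Fin r) (ι₀ × Fin r) ℂ), X.PosSemidef → (tensorIdT L X).PosSemidef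

def IsTracePreserving {ι₀ ι₁ : Type} [Fintype ι₀] [Fintype ι₁] (L : MatMap ι₀ ι₁) : Prop :=
  ∀ X, (L X).trace = X.trace

/-- A quantum channel: a linear, completely positive, trace-preserving map. -/
def IsChannel {ι₀ ι₁ : Type} [Fintype ι₀] [Fintype ι₁] (L : MatMap ι₀ ι₁) : Prop :=
  IsLinearFun L ∧ IsCompletelyPositive L ∧ IsTracePreserving L

/-- Tensor product of two matrix maps, defined on matrix units and extended linearly. -/
def tensorMap {α₀ α₁ β₀ β₁ : Type} [Fintype α₀] [DecidableEq α₀] [Fintype β₀] [DecidableEq β₀]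
    (LA : MatMap α₀ α₁) (LB : MatMap β₀ β₁) : MatMap (α₀ × β₀) (α₁ × β₁) :=
  fun X => ∑ i : α₀, ∑ j : α₀, ∑ k : β₀, ∑ l : β₀,
    X (i, k) (j, l) • (LA (Matrix.single i j 1) ⊗ₖ LB (Matrix.single k l 1))

/-- Separable bipartite channel (cut `α : β`). -/
def IsSepChannel {α₀ β₀ α₁ β₁ : Type}
    [Fintype α₀] [DecidableEq α₀] [Fintype β₀] [DecidableEq β₀] [Fintype α₁] [Fintype β₁]
    (N : MatMap (α₀ × β₀) (α₁ × β₁)) : Prop :=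
  IsChannel N ∧ ∃ (n : ℕ) (LA : Fin n → MatMap α₀ α₁) (LB : Fin n → MatMap β₀ β₁),
    (∀ k, IsLinearFun (LA k) ∧ IsCompletelyPositive (LA k) ∧
          IsLinearFun (LB k) ∧ IsCompletelyPositive (LB k)) ∧
    ∀ X, N X = ∑ k, tensorMap (LA k) (LB k) X

/-- The square root of a positive semidefinite matrix, as `Matrix.PosSemidef.sqrt` was defined
in the older Mathlib (that declaration is gone). -/
def posSemidefSqrt {ι : Type} [Fintype ι] [DecidableEq ι] {A : Matrix ι ι ℂ}
    (hA : A.PosSemidef) : Matrix ι ι ℂ :=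
  (hA.1.eigenvectorUnitary : Matrix ι ι ℂ) *
    Matrix.diagonal ((↑) ∘ (Real.sqrt ·) ∘ hA.1.eigenvalues) *
    (star hA.1.eigenvectorUnitary : Matrix ι ι ℂ)

/-- Trace norm `‖X‖₁ = tr √(X† X)`. -/
def traceNorm {ι : Type} [Fintype ι] [DecidableEq ι] (X : Matrix ι ι ℂ) : ℝ :=
  (posSemidefSqrt (Matrix.posSemidef_conjTranspose_mul_self X)).trace.re

/-- Density matrix. -/
def IsState {ι : Type} [Fintype ι] (ρ : Matrix ι ι ℂ) : Prop :=
  ρ.PosSemidef ∧ ρ.trace = 1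

/-- Pure state (rank-one density matrix). -/
def IsPureState {ι : Type} [Fintype ι] (ρ : Matrix ι ι ℂ) : Prop :=
  ∃ v : ι → ℂ, (∑ i, Complex.normSq (v i)) = 1 ∧
    ρ = Matrix.vecMulVec v (fun i => star (v i))

/-- Diamond norm. -/
def diamondNorm {ι₀ ι₁ : Type} [Fintype ι₀] [Fintype ι₁] [DecidableEq ι₁]
    (L : MatMap ι₀ ι₁) : ℝ :=
  sSup { t : ℝ | ∃ (r : ℕ) (ρ : Matrix (ι₀ × Fin r) (ι₀ × Fin r) ℂ),
    ρ.PosSemidef ∧ ρ.trace = 1 ∧ t = traceNorm (tensorIdT L ρ) }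

section Bipartite

variable {α₀ β₀ α₁ β₁ α₀' β₀' α₁' β₁' : Type}
variable [Fintype α₀] [DecidableEq α₀] [Fintype β₀] [DecidableEq β₀]
variable [Fintype α₁] [DecidableEq α₁] [Fintype β₁] [DecidableEq β₁]
variable [Fintype α₀'] [DecidableEq α₀'] [Fintype β₀'] [DecidableEq β₀']
variable [Fintype α₁'] [DecidableEq α₁'] [Fintype β₁'] [DecidableEq β₁']

/-- Standard robustness w.r.t. separable channels. -/
def stdRobustness (N : MatMap (α₀ × β₀) (α₁ × β₁)) : ℝ :=
  sInf { s : ℝ | 0 ≤ s ∧ ∃ M : MatMap (α₀ × β₀) (α₁ × β₁), IsSepChannel M ∧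
    IsSepChannel (fun X => (1 + s)⁻¹ • (N X + s • M X)) }

/-- Generalized robustness w.r.t. separable channels. -/
def genRobustness (N : MatMap (α₀ × β₀) (α₁ × β₁)) : ℝ :=
  sInf { s : ℝ | 0 ≤ s ∧ ∃ M : MatMap (α₀ × β₀) (α₁ × β₁), IsChannel M ∧
    IsSepChannel (fun X => (1 + s)⁻¹ • (N X + s • M X)) }

/-- Standard log-robustness. -/
def LRs (N : MatMap (α₀ × β₀) (α₁ × β₁)) : ℝ := Real.logb 2 (1 + stdRobustness N)

/-- Generalized log-robustness. -/
def LRgen (N : MatMap (α₀ × β₀) (α₁ × β₁)) : ℝ := Real.logb 2 (1 + genRobustness N)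

/-- Smooth standard log-robustness. -/
def smoothLRs (ε : ℝ) (N : MatMap (α₀ × β₀) (α₁ × β₁)) : ℝ :=
  sInf { t : ℝ | ∃ N' : MatMap (α₀ × β₀) (α₁ × β₁), IsChannel N' ∧
    (1/2) * diamondNorm (fun X => N' X - N X) ≤ ε ∧ t = LRs N' }

/-- Smooth generalized log-robustness. -/
def smoothLRgen (ε : ℝ) (N : MatMap (α₀ × β₀) (α₁ × β₁)) : ℝ :=
  sInf { t : ℝ | ∃ N' : MatMap (α₀ × β₀) (α₁ × β₁), IsChannel N' ∧
    (1/2) * diamondNorm (fun X => N' X - N X) ≤ ε ∧ t = LRgen N' }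

end Bipartite

/-- A superchannel, given by pre- and post-processing channels with a memory system `Fin e`. -/
structure Superchannel (α₀ β₀ α₁ β₁ α₀' β₀' α₁' β₁' : Type)
    [Fintype α₀] [Fintype β₀] [Fintype α₁] [Fintype β₁]
    [Fintype α₀'] [Fintype β₀'] [Fintype α₁'] [Fintype β₁'] : Type where
  e : ℕ
  pre : MatMap (α₀' × β₀') ((α₀ × β₀) × Fin e)
  post : MatMap ((α₁ × β₁) × Fin e) (α₁' × β₁')
  pre_channel : IsChannel pre
  post_channel : IsChannel post

section Super

variable {α₀ β₀ α₁ β₁ α₀' β₀' α₁' β₁' : Type}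
variable [Fintype α₀] [DecidableEq α₀] [Fintype β₀] [DecidableEq β₀]
variable [Fintype α₁] [DecidableEq α₁] [Fintype β₁] [DecidableEq β₁]
variable [Fintype α₀'] [DecidableEq α₀'] [Fintype β₀'] [DecidableEq β₀']
variable [Fintype α₁'] [DecidableEq α₁'] [Fintype β₁'] [DecidableEq β₁']

/-- Action of a superchannel on a channel: `Θ[E] = post ∘ (E ⊗ id) ∘ pre`. -/
def Superchannel.apply (Θ : Superchannel α₀ β₀ α₁ β₁ α₀' β₀' α₁' β₁')
    (E : MatMap (α₀ × β₀) (α₁ × β₁)) : MatMap (α₀' × β₀') (α₁' × β₁') :=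
  fun X => Θ.post (tensorIdT E (Θ.pre X))

/-- Separability-preserving superchannel. -/
def IsSEPPSC (Θ : Superchannel α₀ β₀ α₁ β₁ α₀' β₀' α₁' β₁') : Prop :=
  ∀ M : MatMap (α₀ × β₀) (α₁ × β₁), IsSepChannel M → IsSepChannel (Θ.apply M)

/-- δ-separability-preserving superchannel. -/
def IsDeltaSEPPSC (δ : ℝ) (Θ : Superchannel α₀ β₀ α₁ β₁ α₀' β₀' α₁' β₁') : Prop :=
  ∀ M : MatMap (α₀ × β₀) (α₁ × β₁), IsSepChannel M → genRobustness (Θ.apply M) ≤ δ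

end Super

/-- The swap unitary `F = Σ |ij⟩⟨ji|` on `ℂ^K ⊗ ℂ^K`. -/
def swapMatrix (K : ℕ) : Matrix (Fin K × Fin K) (Fin K × Fin K) ℂ :=
  Matrix.of fun p q => if p.1 = q.2 ∧ p.2 = q.1 then 1 else 0

/-- The `K`-swap channel `X ↦ F X F†`. -/
def swapChannel (K : ℕ) : MatMap (Fin K × Fin K) (Fin K × Fin K) :=
  fun X => swapMatrix K * X * (swapMatrix K)ᴴ

/-- The density matrix of the `K`-maximally entangled state inside `ℂ^{dA} ⊗ ℂ^{dB}`. -/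
def maxEntangled (dA dB K : ℕ) : Matrix (Fin dA × Fin dB) (Fin dA × Fin dB) ℂ :=
  Matrix.of fun p q =>
    if (p.1 : ℕ) = (p.2 : ℕ) ∧ (q.1 : ℕ) = (q.2 : ℕ) ∧ (p.1 : ℕ) < K ∧ (q.1 : ℕ) < K
    then (1 / K : ℂ) else 0

/-- Separable bipartite state. -/
def IsSepState {ιA ιB : Type} [Fintype ιA] [Fintype ιB]
    (σ : Matrix (ιA × ιB) (ιA × ιB) ℂ) : Prop :=
  ∃ (n : ℕ) (p : Fin n → ℝ) (φ : Fin n → ιA → ℂ) (ψ : Fin n → ιB → ℂ),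
    (∀ a, 0 ≤ p a) ∧ (∑ a, p a) = 1 ∧
    (∀ a, (∑ i, Complex.normSq (φ a i)) = 1) ∧
    (∀ a, (∑ i, Complex.normSq (ψ a i)) = 1) ∧
    σ = ∑ a, (p a : ℂ) •
      (Matrix.vecMulVec (φ a) (fun i => star (φ a i)) ⊗ₖ
       Matrix.vecMulVec (ψ a) (fun i => star (ψ a i)))

/-- Input state `Φ^{a₀}_{A₀Ã₀} ⊗ Φ^{b₀}_{B₀B̃₀}` for the Choi matrix, with index
grouping `(A₀ × B₀) × (Ã₀ × B̃₀)`. -/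
def choiInput (a₀ b₀ : ℕ) :
    Matrix ((Fin a₀ × Fin b₀) × (Fin a₀ × Fin b₀)) ((Fin a₀ × Fin b₀) × (Fin a₀ × Fin b₀)) ℂ :=
  Matrix.of fun p q =>
    maxEntangled a₀ a₀ a₀ (p.1.1, p.2.1) (q.1.1, q.2.1) *
    maxEntangled b₀ b₀ b₀ (p.1.2, p.2.2) (q.1.2, q.2.2)

/-- Normalized Choi matrix of a bipartite channel. -/
def choiBi {a₀ b₀ : ℕ} {ι₁ : Type} (E : MatMap (Fin a₀ × Fin b₀) ι₁) :
    Matrix (ι₁ × (Fin a₀ × Fin b₀)) (ι₁ × (Fin a₀ × Fin b₀)) ℂ :=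
  tensorIdT E (choiInput a₀ b₀)

/-- Normalized Choi matrix of a single-system channel. -/
def choi1 {d : ℕ} {ι₁ : Type} (N : MatMap (Fin d) ι₁) :
    Matrix (ι₁ × Fin d) (ι₁ × Fin d) ℂ :=
  tensorIdT N (maxEntangled d d d)

open Classical in
/-- Square root of a matrix (positive semidefinite case, junk value `0` otherwise). -/
def matSqrt {ι : Type} [Fintype ι] [DecidableEq ι] (A : Matrix ι ι ℂ) : Matrix ι ι ℂ :=
  if h : A.PosSemidef then posSemidefSqrt h else 0

/-- Fidelity `F(ρ,σ) = (tr √(√ρ σ √ρ))²`. -/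
def fidelity {ι : Type} [Fintype ι] [DecidableEq ι] (ρ σ : Matrix ι ι ℂ) : ℝ :=
  ((matSqrt (matSqrt ρ * σ * matSqrt ρ)).trace.re) ^ 2

section OpTasks

variable {α₀ β₀ α₁ β₁ α₀' β₀' α₁' β₁' : Type}
variable [Fintype α₀] [DecidableEq α₀] [Fintype β₀] [DecidableEq β₀]
variable [Fintype α₁] [DecidableEq α₁] [Fintype β₁] [DecidableEq β₁]
variable [Fintype α₀'] [DecidableEq α₀'] [Fintype β₀'] [DecidableEq β₀']
variable [Fintype α₁'] [DecidableEq α₁'] [Fintype β₁'] [DecidableEq β₁']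

/-- One-shot dynamic entanglement cost under SEPPSC. -/
def oneShotCostSEPP (ε : ℝ) (N : MatMap (α₀ × β₀) (α₁ × β₁)) : ℝ :=
  sInf { t : ℝ | ∃ (K : ℕ) (Θ : Superchannel (Fin K) (Fin K) (Fin K) (Fin K) α₀ β₀ α₁ β₁),
    IsSEPPSC Θ ∧
    (1/2) * diamondNorm (fun X => Θ.apply (swapChannel K) X - N X) ≤ ε ∧
    t = Real.logb 2 ((K : ℝ) ^ 2) }

/-- One-shot distillable dynamic entanglement under SEPPSC. -/
def oneShotDistillSEPP (ε : ℝ) (N : MatMap (α₀ × β₀) (α₁ × β₁)) : ℝ :=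
  sSup { t : ℝ | ∃ (K : ℕ) (Θ : Superchannel α₀ β₀ α₁ β₁ (Fin K) (Fin K) (Fin K) (Fin K)),
    IsSEPPSC Θ ∧
    (1/2) * diamondNorm (fun X => Θ.apply N X - swapChannel K X) ≤ ε ∧
    t = Real.logb 2 ((K : ℝ) ^ 2) }

/-- Hypothesis-testing relative entropy of dynamic entanglement. -/
def EH (ε : ℝ) (N : MatMap (α₀ × β₀) (α₁ × β₁)) : ℝ :=
  sSup { t : ℝ | ∃ (r : ℕ) (Ψ : Matrix ((α₀ × β₀) × Fin r) ((α₀ × β₀) × Fin r) ℂ)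
      (Q : Matrix ((α₁ × β₁) × Fin r) ((α₁ × β₁) × Fin r) ℂ),
    IsPureState Ψ ∧ Q.PosSemidef ∧ ((1 : Matrix ((α₁ × β₁) × Fin r) ((α₁ × β₁) × Fin r) ℂ) - Q).PosSemidef ∧
    1 - ε ≤ ((tensorIdT N Ψ * Q).trace).re ∧
    t = sInf { u : ℝ | ∃ M : MatMap (α₀ × β₀) (α₁ × β₁), IsSepChannel M ∧
        u = - Real.logb 2 (((tensorIdT M Ψ * Q).trace).re) } }

end OpTasks

/-- Reindexing a matrix map along equivalences of index types. -/
def reindexMap {ι₀ ι₁ κ₀ κ₁ : Type} (e₀ : ι₀ ≃ κ₀) (e₁ : ι₁ ≃ κ₁) (L : MatMap ι₀ ι₁) :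
    MatMap κ₀ κ₁ :=
  fun X => Matrix.reindex e₁ e₁ (L (Matrix.reindex e₀.symm e₀.symm X))

section Cat

variable {α₀ β₀ α₁ β₁ : Type}
variable [Fintype α₀] [DecidableEq α₀] [Fintype β₀] [DecidableEq β₀]
variable [Fintype α₁] [DecidableEq α₁] [Fintype β₁] [DecidableEq β₁]

/-- `N ⊗ F^L` as a bipartite channel for the cut `A C : B D` (catalyst `CD` of dimension `L×L`). -/
def tensorSwapCut (N : MatMap (α₀ × β₀) (α₁ × β₁)) (L : ℕ) :
    MatMap ((α₀ × Fin L) × (β₀ × Fin L)) ((α₁ × Fin L) × (β₁ × Fin L)) :=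
  reindexMap (Equiv.prodProdProdComm α₀ β₀ (Fin L) (Fin L))
             (Equiv.prodProdProdComm α₁ β₁ (Fin L) (Fin L))
             (tensorMap N (swapChannel L))

/-- One-shot catalytic dynamic entanglement cost under δ-SEPPSC. -/
def catalyticCost (δ ε : ℝ) (N : MatMap (α₀ × β₀) (α₁ × β₁)) : ℝ :=
  sInf { t : ℝ | ∃ (K L : ℕ)
      (Θ : Superchannel (Fin K × Fin L) (Fin K × Fin L) (Fin K × Fin L) (Fin K × Fin L)
            (α₀ × Fin L) (β₀ × Fin L) (α₁ × Fin L) (β₁ × Fin L)),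
    IsDeltaSEPPSC δ Θ ∧
    ∃ N' : MatMap (α₀ × β₀) (α₁ × β₁), IsChannel N' ∧
      (1/2) * diamondNorm (fun X => N' X - N X) ≤ ε ∧
      Θ.apply (tensorSwapCut (swapChannel K) L) = tensorSwapCut N' L ∧
      t = Real.logb 2 ((K : ℝ) ^ 2) }

end Cat

/-- Discrete Weyl operators on `ℂ^K`. -/
def weyl (K : ℕ) (k l : Fin K) : Matrix (Fin K) (Fin K) ℂ :=
  Matrix.of fun a s =>
    if (a : ℕ) = ((k : ℕ) + (s : ℕ)) % K
    then Complex.exp (2 * (Real.pi : ℂ) * Complex.I * ((s : ℕ) : ℂ) * ((l : ℕ) : ℂ) / (K : ℂ))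
    else 0

/-- `n`-fold tensor power of a matrix. -/
def matPow {ι : Type} [Fintype ι] (X : Matrix ι ι ℂ) (n : ℕ) :
    Matrix (Fin n → ι) (Fin n → ι) ℂ :=
  Matrix.of fun f g => ∏ t, X (f t) (g t)

/-- `n`-fold tensor power of a matrix map. -/
def powMap {ι₀ ι₁ : Type} [Fintype ι₀] [DecidableEq ι₀] (L : MatMap ι₀ ι₁) (n : ℕ) :
    MatMap (Fin n → ι₀) (Fin n → ι₁) :=
  fun X => Matrix.of fun f' g' => ∑ f : Fin n → ι₀, ∑ g : Fin n → ι₀,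
    X f g * ∏ t, L (Matrix.single (f t) (g t) 1) (f' t) (g' t)

section Pow

variable {α₀ β₀ α₁ β₁ : Type}
variable [Fintype α₀] [DecidableEq α₀] [Fintype β₀] [DecidableEq β₀]
variable [Fintype α₁] [DecidableEq α₁] [Fintype β₁] [DecidableEq β₁]

/-- `n`-fold tensor power of a bipartite channel, with cut `A^n : B^n`. -/
def powBi (N : MatMap (α₀ × β₀) (α₁ × β₁)) (n : ℕ) :
    MatMap ((Fin n → α₀) × (Fin n → β₀)) ((Fin n → α₁) × (Fin n → β₁)) :=
  reindexMap (Equiv.arrowProdEquivProdArrow (Fin n) (fun _ => α₀) (fun _ => β₀))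
             (Equiv.arrowProdEquivProdArrow (Fin n) (fun _ => α₁) (fun _ => β₁))
             (powMap N n)

/-- `φ^{⊗n}` of a bipartite input-reference state, regrouped as
`((A₀ⁿ × B₀ⁿ) × refⁿ)`. -/
def phiPow (n : ℕ)
    (φ : Matrix ((α₀ × β₀) × (α₀ × β₀)) ((α₀ × β₀) × (α₀ × β₀)) ℂ) :
    Matrix (((Fin n → α₀) × (Fin n → β₀)) × (Fin n → (α₀ × β₀)))
           (((Fin n → α₀) × (Fin n → β₀)) × (Fin n → (α₀ × β₀))) ℂ :=
  Matrix.reindex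
    ((Equiv.arrowProdEquivProdArrow (Fin n) (fun _ => α₀ × β₀) (fun _ => α₀ × β₀)).trans
      (Equiv.prodCongr (Equiv.arrowProdEquivProdArrow (Fin n) (fun _ => α₀) (fun _ => β₀)) (Equiv.refl _)))
    ((Equiv.arrowProdEquivProdArrow (Fin n) (fun _ => α₀ × β₀) (fun _ => α₀ × β₀)).trans
      (Equiv.prodCongr (Equiv.arrowProdEquivProdArrow (Fin n) (fun _ => α₀) (fun _ => β₀)) (Equiv.refl _)))
    (matPow φ n)

end Pow

open Classical in
/-- Base-2 matrix logarithm via the spectral decomposition (junk value `0` if not Hermitian). -/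
def matLogb2 {ι : Type} [Fintype ι] [DecidableEq ι] (A : Matrix ι ι ℂ) : Matrix ι ι ℂ :=
  if h : A.IsHermitian then
    (h.eigenvectorUnitary : Matrix ι ι ℂ) *
      Matrix.diagonal (fun i => ((Real.logb 2 (h.eigenvalues i) : ℝ) : ℂ)) *
      (star h.eigenvectorUnitary : Matrix ι ι ℂ)
  else 0

/-- Umegaki relative entropy `D(ρ‖σ) = tr ρ (log₂ ρ − log₂ σ)`. -/
def relEnt {ι : Type} [Fintype ι] [DecidableEq ι] (ρ σ : Matrix ι ι ℂ) : ℝ :=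
  ((ρ * (matLogb2 ρ - matLogb2 σ)).trace).re

section Liberal

variable {α₀ β₀ α₁ β₁ : Type}
variable [Fintype α₀] [DecidableEq α₀] [Fintype β₀] [DecidableEq β₀]
variable [Fintype α₁] [DecidableEq α₁] [Fintype β₁] [DecidableEq β₁]

/-- Zero-error one-shot dynamic entanglement cost under SEPPSC. -/
def zeroCostSEPP (N : MatMap (α₀ × β₀) (α₁ × β₁)) : ℝ :=
  sInf { t : ℝ | ∃ (K : ℕ) (Θ : Superchannel (Fin K) (Fin K) (Fin K) (Fin K) α₀ β₀ α₁ β₁),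
    IsSEPPSC Θ ∧ Θ.apply (swapChannel K) = N ∧ t = Real.logb 2 ((K : ℝ) ^ 2) }

/-- Liberal (asymptotic) dynamic entanglement cost under SEPPSC. -/
def liberalCost (N : MatMap (α₀ × β₀) (α₁ × β₁)) : ℝ :=
  limUnder (nhdsWithin (0 : ℝ) (Set.Ioi 0)) (fun ε : ℝ =>
    liminf (fun n : ℕ =>
      (1 / (n : ℝ)) * sSup { t : ℝ |
        ∃ φ : Matrix ((α₀ × β₀) × (α₀ × β₀)) ((α₀ × β₀) × (α₀ × β₀)) ℂ, IsState φ ∧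
          t = sInf { u : ℝ |
            ∃ N'' : MatMap ((Fin n → α₀) × (Fin n → β₀)) ((Fin n → α₁) × (Fin n → β₁)),
              IsChannel N'' ∧
              (1/2) * traceNorm
                (tensorIdT N'' (phiPow n φ) - tensorIdT (powBi N n) (phiPow n φ)) ≤ ε ∧
              u = zeroCostSEPP N'' } }) atTop)

/-- Liberal regularized relative entropy with respect to separable channels. -/
def liberalRelEnt (N : MatMap (α₀ × β₀) (α₁ × β₁)) : ℝ :=
  limUnder atTop (fun n : ℕ =>
    (1 / (n : ℝ)) * sSup { t : ℝ |
      ∃ φ : Matrix ((α₀ × β₀) × (α₀ × β₀)) ((α₀ × β₀) × (α₀ × β₀)) ℂ, IsState φ ∧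
        t = sInf { u : ℝ | ∃ M : MatMap (α₀ × β₀) (α₁ × β₁), IsSepChannel M ∧
          u = relEnt (tensorIdT (powBi N n) (phiPow n φ))
                     (tensorIdT (powBi M n) (phiPow n φ)) } })

end Liberal


set_option linter.unusedSectionVars false
set_option maxHeartbeats 1000000

section SqrtAux
open scoped MatrixOrder
variable {ι : Type} [Fintype ι] [DecidableEq ι]

theorem posSemidefSqrt_eq_cfc {A : Matrix ι ι ℂ} (hA : A.PosSemidef) :
    posSemidefSqrt hA = CFC.sqrt A := by
  rw [CFC.sqrt_eq_real_sqrt A hA.nonneg, cfcₙ_eq_cfc, hA.1.cfc_eq]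
  simp [IsHermitian.cfc, posSemidefSqrt, Function.comp_def, Unitary.conjStarAlgAut_apply]

theorem _root_.Matrix.PosSemidef.posSemidef_sqrt {A : Matrix ι ι ℂ} (hA : A.PosSemidef) :
    (posSemidefSqrt hA).PosSemidef := by
  rw [posSemidefSqrt_eq_cfc]; exact (CFC.sqrt_nonneg A).posSemidef

theorem _root_.Matrix.PosSemidef.sqrt_mul_self {A : Matrix ι ι ℂ} (hA : A.PosSemidef) :
    posSemidefSqrt hA * posSemidefSqrt hA = A := by
  rw [posSemidefSqrt_eq_cfc]; exact CFC.sqrt_mul_sqrt_self A hA.nonneg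

theorem _root_.Matrix.PosSemidef.sq_sqrt {A : Matrix ι ι ℂ} (hA : A.PosSemidef) :
    posSemidefSqrt hA ^ 2 = A := by
  rw [sq]; exact hA.sqrt_mul_self

theorem _root_.Matrix.PosSemidef.eq_sqrt_of_sq_eq {A : Matrix ι ι ℂ} (hA : A.PosSemidef)
    {B : Matrix ι ι ℂ} (hB : B.PosSemidef) (hAB : A ^ 2 = B) : A = posSemidefSqrt hB := by
  rw [posSemidefSqrt_eq_cfc, eq_comm, CFC.sqrt_eq_iff B A hB.nonneg hA.nonneg, ← sq, hAB]

end SqrtAux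

section AuxProofs


variable {ι κ : Type} [Fintype ι] [DecidableEq ι] [Fintype κ] [DecidableEq κ]

/-- squared euclidean norm of a complex vector -/
def vnsq (v : ι → ℂ) : ℝ := ∑ i, Complex.normSq (v i)

lemma vnsq_nonneg (v : ι → ℂ) : 0 ≤ vnsq v :=
  Finset.sum_nonneg fun _ _ => Complex.normSq_nonneg _

lemma sqrt_vnsq_eq_norm (v : ι → ℂ) :
    Real.sqrt (vnsq v) = ‖(WithLp.equiv 2 (ι → ℂ)).symm v‖ := by
  rw [EuclideanSpace.norm_eq]
  congr 1
  unfold vnsq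
  congr 1
  ext i
  simp [Complex.normSq_eq_norm_sq]

lemma abs_dot_le (v w : ι → ℂ) :
    ‖star v ⬝ᵥ w‖ ≤ Real.sqrt (vnsq v) * Real.sqrt (vnsq w) := by
  have h := norm_inner_le_norm (𝕜 := ℂ) ((WithLp.equiv 2 (ι → ℂ)).symm v)
    ((WithLp.equiv 2 (ι → ℂ)).symm w)
  change ‖w ⬝ᵥ star v‖ ≤ _ at h
  rw [dotProduct_comm] at h
  rw [sqrt_vnsq_eq_norm, sqrt_vnsq_eq_norm]
  exact h

lemma dot_self_eq_vnsq (v : ι → ℂ) : star v ⬝ᵥ v = ((vnsq v : ℝ) : ℂ) := by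
  unfold vnsq
  push_cast
  simp [dotProduct, Complex.normSq_eq_conj_mul_self]

/-- operator-norm style bound on a (rectangular) matrix -/
def vGrow (c : ℝ) (A : Matrix κ ι ℂ) : Prop :=
  ∀ v, Real.sqrt (vnsq (A *ᵥ v)) ≤ c * Real.sqrt (vnsq v)

lemma vGrow_unitary {U : Matrix ι ι ℂ} (hU : U ∈ Matrix.unitaryGroup ι ℂ) :
    vGrow 1 U := by
  intro v
  have : vnsq (U *ᵥ v) = vnsq v := by
    have h1 : star (U *ᵥ v) ⬝ᵥ (U *ᵥ v) = star v ⬝ᵥ v := by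
      rw [star_mulVec, dotProduct_mulVec, vecMul_vecMul, ← Matrix.star_eq_conjTranspose,
        (Matrix.mem_unitaryGroup_iff').mp hU, vecMul_one]
    rw [dot_self_eq_vnsq, dot_self_eq_vnsq] at h1
    exact_mod_cast h1
  rw [this, one_mul]

lemma vGrow_mul {κ₁ κ₂ : Type} [Fintype κ₁] [DecidableEq κ₁] [Fintype κ₂] [DecidableEq κ₂]
    {c₁ c₂ : ℝ} (hc₁ : 0 ≤ c₁) {A : Matrix κ₂ κ₁ ℂ} {B : Matrix κ₁ ι ℂ}
    (hA : vGrow c₁ A) (hB : vGrow c₂ B) : vGrow (c₁ * c₂) (A * B) := by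
  intro v
  rw [← mulVec_mulVec]
  calc Real.sqrt (vnsq (A *ᵥ B *ᵥ v)) ≤ c₁ * Real.sqrt (vnsq (B *ᵥ v)) := hA _
    _ ≤ c₁ * (c₂ * Real.sqrt (vnsq v)) := by
        exact mul_le_mul_of_nonneg_left (hB v) hc₁
    _ = c₁ * c₂ * Real.sqrt (vnsq v) := by ring

lemma vGrow_frobenius (A : Matrix κ ι ℂ) :
    vGrow (Real.sqrt (∑ i, ∑ j, Complex.normSq (A i j))) A := by
  intro v
  rw [← Real.sqrt_mul (Finset.sum_nonneg fun (i : κ) _ => Finset.sum_nonneg fun (j : ι) _ => Complex.normSq_nonneg (A i j))]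
  apply Real.sqrt_le_sqrt
  unfold vnsq
  rw [Finset.sum_mul]
  apply Finset.sum_le_sum
  intro i _
  have h : (A *ᵥ v) i = star (fun j => (starRingEnd ℂ) (A i j)) ⬝ᵥ v := by
    simp [mulVec, dotProduct]
  rw [h]
  have := abs_dot_le (fun j => (starRingEnd ℂ) (A i j)) v
  have h2 : Complex.normSq (star (fun j => (starRingEnd ℂ) (A i j)) ⬝ᵥ v)
      ≤ (Real.sqrt (vnsq fun j => (starRingEnd ℂ) (A i j)) * Real.sqrt (vnsq v))^2 := by
    rw [← Complex.sq_norm]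
    apply sq_le_sq' (by nlinarith [norm_nonneg (star (fun j => (starRingEnd ℂ) (A i j)) ⬝ᵥ v)]) this
  calc Complex.normSq (star (fun j => (starRingEnd ℂ) (A i j)) ⬝ᵥ v)
      ≤ (Real.sqrt (vnsq fun j => (starRingEnd ℂ) (A i j)) * Real.sqrt (vnsq v))^2 := h2
    _ = vnsq (fun j => (starRingEnd ℂ) (A i j)) * vnsq v := by
        rw [mul_pow, Real.sq_sqrt (vnsq_nonneg _), Real.sq_sqrt (vnsq_nonneg _)]
    _ = (∑ j, Complex.normSq (A i j)) * vnsq v := by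
        unfold vnsq; congr 1; exact Finset.sum_congr rfl fun j _ => by simp



variable {ι κ : Type} [Fintype ι] [DecidableEq ι] [Fintype κ] [DecidableEq κ]

lemma conjDiag_posSemidef {V : Matrix ι ι ℂ} (hV : V ∈ Matrix.unitaryGroup ι ℂ)
    (f : ι → ℝ) (hf : ∀ i, 0 ≤ f i) :
    (V * Matrix.diagonal (fun i => ((f i : ℝ) : ℂ)) * star V).PosSemidef := by
  have key : V * Matrix.diagonal (fun i => ((f i : ℝ) : ℂ)) * star V
      = (V * Matrix.diagonal (fun i => ((Real.sqrt (f i) : ℝ) : ℂ))) *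
        (V * Matrix.diagonal (fun i => ((Real.sqrt (f i) : ℝ) : ℂ)))ᴴ := by
    rw [conjTranspose_mul, diagonal_conjTranspose]
    have hstar : star (fun i => ((Real.sqrt (f i) : ℝ) : ℂ)) = fun i => ((Real.sqrt (f i) : ℝ) : ℂ) := by
      funext i; simp
    rw [hstar]
    rw [show (V * diagonal fun i => ((Real.sqrt (f i) : ℝ) : ℂ)) *
        ((diagonal fun i => ((Real.sqrt (f i) : ℝ) : ℂ)) * Vᴴ)
        = V * ((diagonal fun i => ((Real.sqrt (f i) : ℝ) : ℂ)) *
          (diagonal fun i => ((Real.sqrt (f i) : ℝ) : ℂ))) * Vᴴ by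
        simp only [Matrix.mul_assoc]]
    rw [diagonal_mul_diagonal]
    have hdd : (fun i => ((Real.sqrt (f i) : ℝ) : ℂ) * ((Real.sqrt (f i) : ℝ) : ℂ))
        = fun i => ((f i : ℝ) : ℂ) := by
      funext i
      rw [← Complex.ofReal_mul, Real.mul_self_sqrt (hf i)]
    rw [hdd, Matrix.star_eq_conjTranspose]
  rw [key]
  exact posSemidef_self_mul_conjTranspose _

lemma vnsq_eq_zero {v : ι → ℂ} (h : vnsq v = 0) : v = 0 := by
  funext i
  have := (Finset.sum_eq_zero_iff_of_nonneg (fun i _ => Complex.normSq_nonneg (v i))).mp h i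
    (Finset.mem_univ i)
  simpa using Complex.normSq_eq_zero.mp this

/-- Polar decomposition of a square complex matrix. -/
lemma exists_polar (Mm : Matrix ι ι ℂ) :
    ∃ U ∈ Matrix.unitaryGroup ι ℂ,
      Mm = U * (posSemidefSqrt (posSemidef_conjTranspose_mul_self Mm)) := by
  classical
  set hH := posSemidef_conjTranspose_mul_self Mm with hHdef
  have hHerm : (Mmᴴ * Mm).IsHermitian := hH.1
  set V : Matrix ι ι ℂ := (hHerm.eigenvectorUnitary : Matrix ι ι ℂ) with hVdef
  have hV : V ∈ Matrix.unitaryGroup ι ℂ := (hHerm.eigenvectorUnitary).2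
  set lam : ι → ℝ := hHerm.eigenvalues with hlamdef
  have hlam : ∀ i, 0 ≤ lam i := hH.eigenvalues_nonneg
  have hspec : Mmᴴ * Mm = V * Matrix.diagonal (fun i => ((lam i : ℝ) : ℂ)) * star V := by
    have := hHerm.spectral_theorem
    convert this using 2
    rw [Unitary.conjStarAlgAut_apply]; rfl
  -- columns of M * V
  set x : ι → (ι → ℂ) := fun i => (fun k => (Mm * V) k i) with hxdef
  have hVV : star V * V = 1 := (Matrix.mem_unitaryGroup_iff').mp hV
  have hVV' : V * star V = 1 := (Matrix.mem_unitaryGroup_iff).mp hV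
  have hgram : (Mm * V)ᴴ * (Mm * V) = Matrix.diagonal (fun i => ((lam i : ℝ) : ℂ)) := by
    rw [conjTranspose_mul, show Vᴴ * Mmᴴ * (Mm * V) = Vᴴ * (Mmᴴ * Mm) * V by
      simp only [Matrix.mul_assoc], hspec, ← Matrix.star_eq_conjTranspose]
    calc star V * (V * diagonal (fun i => ((lam i : ℝ) : ℂ)) * star V) * V
        = (star V * V) * diagonal (fun i => ((lam i : ℝ) : ℂ)) * (star V * V) := by
          simp only [Matrix.mul_assoc]
      _ = diagonal (fun i => ((lam i : ℝ) : ℂ)) := by rw [hVV]; simp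
  have hdot : ∀ i j, star (x i) ⬝ᵥ x j = if i = j then ((lam i : ℝ) : ℂ) else 0 := by
    intro i j
    have h1 : star (x i) ⬝ᵥ x j = ((Mm * V)ᴴ * (Mm * V)) i j := by
      rw [Matrix.mul_apply]
      simp only [conjTranspose_apply, dotProduct, Pi.star_apply, hxdef]
    rw [h1, hgram, diagonal_apply]
  have hxzero : ∀ i, lam i = 0 → x i = 0 := by
    intro i hi
    apply vnsq_eq_zero
    have h2 := hdot i i
    rw [dot_self_eq_vnsq, if_pos rfl, hi] at h2
    exact_mod_cast h2
  -- orthonormal family on the support of lam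
  set s : Set ι := {i | lam i ≠ 0} with hsdef
  set y : ι → EuclideanSpace ℂ ι :=
    fun i => (WithLp.equiv 2 (ι → ℂ)).symm ((((Real.sqrt (lam i) : ℝ) : ℂ))⁻¹ • x i) with hydef
  have hy : Orthonormal ℂ (s.domRestrict y) := by
    rw [orthonormal_iff_ite]
    intro i j
    have hinner : (inner ℂ (y (i : ι)) (y (j : ι)) : ℂ) =
        ((starRingEnd ℂ) ((((Real.sqrt (lam i) : ℝ) : ℂ))⁻¹) * (((Real.sqrt (lam j) : ℝ) : ℂ))⁻¹)
          * (star (x i) ⬝ᵥ x j) := by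
      rw [hydef]
      simp only [Set.restrict_apply]
      rw [WithLp.equiv_symm_apply, EuclideanSpace.inner_toLp_toLp, dotProduct_comm]
      simp [dotProduct, Finset.mul_sum, Pi.smul_apply, smul_eq_mul]
      congr 1; funext k; ring
    simp only [Set.restrict_apply] at *
    by_cases h : (i : ι) = (j : ι)
    · have hij : i = j := Subtype.ext h
      subst hij
      rw [hinner, hdot, if_pos rfl, if_pos rfl]
      have hlamne : lam (i : ι) ≠ 0 := i.2
      have hpos : 0 < lam (i : ι) := lt_of_le_of_ne (hlam _) (Ne.symm hlamne)
      have hne : ((Real.sqrt (lam (i : ι)) : ℝ) : ℂ) ≠ 0 := by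
        simp only [ne_eq, Complex.ofReal_eq_zero]
        exact ne_of_gt (Real.sqrt_pos.mpr hpos)
      rw [Complex.conj_inv, Complex.conj_ofReal]
      rw [show ((lam (i : ι) : ℝ) : ℂ)
          = ((Real.sqrt (lam (i : ι)) : ℝ) : ℂ) * ((Real.sqrt (lam (i : ι)) : ℝ) : ℂ) by
        rw [← Complex.ofReal_mul, Real.mul_self_sqrt (hlam _)]]
      field_simp
    · rw [hinner, hdot, if_neg h, if_neg (fun hc => h (congrArg Subtype.val hc)), mul_zero]
  obtain ⟨b, hb⟩ := hy.exists_orthonormalBasis_extension_of_card_eq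
    (by simp [finrank_euclideanSpace])
  set Y : Matrix ι ι ℂ := Matrix.of (fun k i => b i k) with hYdef
  have hYmem : Y ∈ Matrix.unitaryGroup ι ℂ := by
    rw [Matrix.mem_unitaryGroup_iff']
    ext i j
    have : (inner ℂ (b i) (b j) : ℂ) = if i = j then 1 else 0 := orthonormal_iff_ite.mp b.orthonormal i j
    rw [EuclideanSpace.inner_eq_star_dotProduct, dotProduct_comm] at this
    simp only [mul_apply, Matrix.star_apply, one_apply, hYdef, Matrix.of_apply]
    rw [← this]
    simp [dotProduct]
  -- M * V = Y * diagonal sqrt lam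
  have hMV : Mm * V = Y * Matrix.diagonal (fun i => ((Real.sqrt (lam i) : ℝ) : ℂ)) := by
    ext k i
    have hrhs : (Y * Matrix.diagonal (fun i => ((Real.sqrt (lam i) : ℝ) : ℂ))) k i
        = Y k i * ((Real.sqrt (lam i) : ℝ) : ℂ) := by
      rw [Matrix.mul_apply, Finset.sum_eq_single i]
      · rw [Matrix.diagonal_apply_eq]
      · intro b' _ hb'
        rw [Matrix.diagonal_apply_ne _ hb', mul_zero]
      · intro h; exact absurd (Finset.mem_univ i) h
    rw [hrhs]
    by_cases hi : lam i = 0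
    · have hx0 : (Mm * V) k i = 0 := congrFun (hxzero i hi) k
      rw [hx0, hi]
      simp
    · have hbi : b i = y i := hb i hi
      have hY : Y k i = ((((Real.sqrt (lam i) : ℝ) : ℂ))⁻¹ * x i k) := by
        show b i k = _
        rw [hbi]
        rfl
      rw [hY]
      have hne : ((Real.sqrt (lam i) : ℝ) : ℂ) ≠ 0 := by
        simp only [ne_eq, Complex.ofReal_eq_zero]
        have hpos : 0 < lam i := lt_of_le_of_ne (hlam _) (Ne.symm hi)
        exact ne_of_gt (Real.sqrt_pos.mpr hpos)
      have hxk : x i k = (Mm * V) k i := rfl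
      rw [← hxk]
      field_simp
  -- the square root
  have hsqrt : (posSemidefSqrt hH) = V * Matrix.diagonal (fun i => ((Real.sqrt (lam i) : ℝ) : ℂ)) * star V := by
    symm
    apply Matrix.PosSemidef.eq_sqrt_of_sq_eq
    · exact conjDiag_posSemidef hV _ (fun i => Real.sqrt_nonneg _)
    · rw [pow_two]
      calc V * diagonal (fun i => ((Real.sqrt (lam i) : ℝ) : ℂ)) * star V *
            (V * diagonal (fun i => ((Real.sqrt (lam i) : ℝ) : ℂ)) * star V)
          = V * diagonal (fun i => ((Real.sqrt (lam i) : ℝ) : ℂ)) * (star V * V) *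
            diagonal (fun i => ((Real.sqrt (lam i) : ℝ) : ℂ)) * star V := by
            simp only [Matrix.mul_assoc]
        _ = V * (diagonal (fun i => ((Real.sqrt (lam i) : ℝ) : ℂ)) *
            diagonal (fun i => ((Real.sqrt (lam i) : ℝ) : ℂ))) * star V := by
            rw [hVV]; simp only [Matrix.mul_one, Matrix.mul_assoc]
        _ = Mmᴴ * Mm := by
            rw [diagonal_mul_diagonal, hspec]
            have hdd : (fun i => ((Real.sqrt (lam i) : ℝ) : ℂ) * ((Real.sqrt (lam i) : ℝ) : ℂ))
                = fun i => ((lam i : ℝ) : ℂ) := by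
              funext i
              rw [← Complex.ofReal_mul, Real.mul_self_sqrt (hlam i)]
            rw [hdd]
  refine ⟨Y * star V, Submonoid.mul_mem _ hYmem (Unitary.star_mem hV), ?_⟩
  rw [hsqrt]
  calc Mm = Mm * (V * star V) := by rw [hVV']; simp
    _ = (Mm * V) * star V := by simp only [Matrix.mul_assoc]
    _ = Y * diagonal (fun i => ((Real.sqrt (lam i) : ℝ) : ℂ)) * star V := by rw [hMV]
    _ = Y * star V * (V * diagonal (fun i => ((Real.sqrt (lam i) : ℝ) : ℂ)) * star V) := by
        rw [show Y * star V * (V * diagonal (fun i => ((Real.sqrt (lam i) : ℝ) : ℂ)) * star V)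
          = Y * (star V * V) * diagonal (fun i => ((Real.sqrt (lam i) : ℝ) : ℂ)) * star V by
            simp only [Matrix.mul_assoc], hVV]
        simp only [Matrix.mul_one, Matrix.mul_assoc]


lemma trace_cms (A : Matrix κ ι ℂ) :
    (Aᴴ * A).trace = ((∑ j, ∑ i, Complex.normSq (A i j) : ℝ) : ℂ) := by
  rw [Matrix.trace]
  push_cast
  apply Finset.sum_congr rfl
  intro j _
  rw [Matrix.diag_apply, Matrix.mul_apply]
  apply Finset.sum_congr rfl
  intro i _
  simp [Complex.normSq_eq_conj_mul_self]

lemma trace_cms_re (A : Matrix κ ι ℂ) :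
    (Aᴴ * A).trace.re = ∑ j, ∑ i, Complex.normSq (A i j) := by
  rw [trace_cms]; simp

lemma psd_trace_real {P : Matrix ι ι ℂ} (hP : P.PosSemidef) :
    P.trace = ((P.trace.re : ℝ) : ℂ) := by
  have h : P = ((posSemidefSqrt hP))ᴴ * (posSemidefSqrt hP) := by
    conv_lhs => rw [← hP.sqrt_mul_self]
    rw [show ((posSemidefSqrt hP))ᴴ = (posSemidefSqrt hP) from hP.posSemidef_sqrt.1]
  rw [h, trace_cms]
  simp

lemma psd_trace_re_nonneg {P : Matrix ι ι ℂ} (hP : P.PosSemidef) : 0 ≤ P.trace.re := by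
  have h : P = ((posSemidefSqrt hP))ᴴ * (posSemidefSqrt hP) := by
    conv_lhs => rw [← hP.sqrt_mul_self]
    rw [show ((posSemidefSqrt hP))ᴴ = (posSemidefSqrt hP) from hP.posSemidef_sqrt.1]
  rw [h, trace_cms_re]
  exact Finset.sum_nonneg fun _ _ => Finset.sum_nonneg fun _ _ => Complex.normSq_nonneg _

lemma traceNorm_eq_of {X S : Matrix ι ι ℂ} (hS : S.PosSemidef) (h : S ^ 2 = Xᴴ * X) :
    traceNorm X = S.trace.re := by
  rw [traceNorm, ← hS.eq_sqrt_of_sq_eq (Matrix.posSemidef_conjTranspose_mul_self X) h]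

lemma traceNorm_nonneg' (X : Matrix ι ι ℂ) : 0 ≤ traceNorm X :=
  psd_trace_re_nonneg (Matrix.posSemidef_conjTranspose_mul_self X).posSemidef_sqrt

lemma traceNorm_psd {P : Matrix ι ι ℂ} (hP : P.PosSemidef) : traceNorm P = P.trace.re := by
  rw [traceNorm_eq_of hP]
  rw [pow_two, show Pᴴ = P from hP.1]

lemma exists_unitary_traceNorm (X : Matrix ι ι ℂ) :
    ∃ U ∈ Matrix.unitaryGroup ι ℂ, (X * U).trace = ((traceNorm X : ℝ) : ℂ) := by
  obtain ⟨U₀, hU₀, hpolar⟩ := exists_polar X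
  refine ⟨star U₀, Unitary.star_mem hU₀, ?_⟩
  have h1 : X * star U₀ = U₀ * (posSemidefSqrt (Matrix.posSemidef_conjTranspose_mul_self X)) * star U₀ := by
    rw [← hpolar]
  rw [h1, Matrix.trace_mul_cycle,
    (Matrix.mem_unitaryGroup_iff').mp hU₀, Matrix.one_mul]
  exact psd_trace_real (Matrix.posSemidef_conjTranspose_mul_self X).posSemidef_sqrt

lemma trace_sandwich {R : Matrix ι ι ℂ} (hR : R.IsHermitian) (Z : Matrix ι ι ℂ) :
    (R * Z * R).trace = ∑ i, star (fun k => R k i) ⬝ᵥ (Z *ᵥ (fun k => R k i)) := by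
  rw [Matrix.trace]
  apply Finset.sum_congr rfl
  intro i _
  rw [Matrix.diag_apply, Matrix.mul_apply]
  simp only [dotProduct, Matrix.mulVec, Matrix.mul_apply, Pi.star_apply, dotProduct,
    Finset.sum_mul, Finset.mul_sum]
  rw [Finset.sum_comm]
  apply Finset.sum_congr rfl
  intro j _
  apply Finset.sum_congr rfl
  intro k _
  have h : star (R j i) = R i j := by
    rw [← Matrix.conjTranspose_apply, hR]
  rw [h]
  ring

lemma hoelder {c : ℝ} (hc : 0 ≤ c) {C : Matrix ι ι ℂ} (hC : vGrow c C) (X : Matrix ι ι ℂ) :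
    ‖(X * C).trace‖ ≤ c * traceNorm X := by
  obtain ⟨U, hU, hpolar⟩ := exists_polar X
  have hPpsd := (Matrix.posSemidef_conjTranspose_mul_self X).posSemidef_sqrt
  set P := (posSemidefSqrt (Matrix.posSemidef_conjTranspose_mul_self X)) with hPdef
  have hRpsd := hPpsd.posSemidef_sqrt
  set R := (posSemidefSqrt hPpsd) with hRdef
  have hRR : R * R = P := hPpsd.sqrt_mul_self
  have hRH : R.IsHermitian := hRpsd.1
  have h1 : (X * C).trace = (R * (C * U) * R).trace := by
    rw [hpolar, ← hRR]
    rw [Matrix.trace_mul_cycle U (R * R) C, Matrix.trace_mul_comm, Matrix.mul_assoc,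
      Matrix.trace_mul_comm R (R * (C * U))]
  rw [h1, trace_sandwich hRH]
  have hterm : ∀ i, ‖star (fun k => R k i) ⬝ᵥ ((C * U) *ᵥ (fun k => R k i))‖
      ≤ c * vnsq (fun k => R k i) := by
    intro i
    calc ‖star (fun k => R k i) ⬝ᵥ ((C * U) *ᵥ (fun k => R k i))‖
        ≤ Real.sqrt (vnsq (fun k => R k i)) *
            Real.sqrt (vnsq ((C * U) *ᵥ (fun k => R k i))) := abs_dot_le _ _
      _ ≤ Real.sqrt (vnsq (fun k => R k i)) *
            ((c * 1) * Real.sqrt (vnsq (fun k => R k i))) := by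
          exact mul_le_mul_of_nonneg_left
            (vGrow_mul hc hC (vGrow_unitary hU) (fun k => R k i)) (Real.sqrt_nonneg _)
      _ = c * vnsq (fun k => R k i) := by
          rw [mul_one]
          rw [show Real.sqrt (vnsq fun k => R k i) * (c * Real.sqrt (vnsq fun k => R k i))
            = c * (Real.sqrt (vnsq fun k => R k i) * Real.sqrt (vnsq fun k => R k i)) by ring]
          rw [Real.mul_self_sqrt (vnsq_nonneg _)]
  calc ‖∑ i, star (fun k => R k i) ⬝ᵥ ((C * U) *ᵥ (fun k => R k i))‖
      ≤ ∑ i, ‖star (fun k => R k i) ⬝ᵥ ((C * U) *ᵥ (fun k => R k i))‖ :=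
        norm_sum_le _ _
    _ ≤ ∑ i, c * vnsq (fun k => R k i) := Finset.sum_le_sum fun i _ => hterm i
    _ = c * ∑ i, vnsq (fun k => R k i) := by rw [← Finset.mul_sum]
    _ = c * traceNorm X := by
        congr 1
        have h2 : traceNorm X = P.trace.re := rfl
        have h3 : P.trace.re = (Rᴴ * R).trace.re := by
          rw [show Rᴴ = R from hRH, hRR]
        rw [h2, h3, trace_cms_re]
        apply Finset.sum_congr rfl
        intro i _
        rfl

lemma traceNorm_triangle (X Y : Matrix ι ι ℂ) :
    traceNorm (X + Y) ≤ traceNorm X + traceNorm Y := by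
  obtain ⟨U, hU, hXY⟩ := exists_unitary_traceNorm (X + Y)
  have h1 : traceNorm (X + Y) = ((X + Y) * U).trace.re := by rw [hXY]; simp
  rw [h1, Matrix.add_mul, Matrix.trace_add]
  have h2 : ∀ Z : Matrix ι ι ℂ, ((Z * U).trace).re ≤ traceNorm Z := by
    intro Z
    calc ((Z * U).trace).re ≤ ‖(Z * U).trace‖ := Complex.re_le_norm _
      _ ≤ 1 * traceNorm Z := hoelder zero_le_one (vGrow_unitary hU) Z
      _ = traceNorm Z := one_mul _
  rw [Complex.add_re]
  exact add_le_add (h2 X) (h2 Y)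

lemma traceNorm_neg (X : Matrix ι ι ℂ) : traceNorm (-X) = traceNorm X := by
  have h : ((posSemidefSqrt (Matrix.posSemidef_conjTranspose_mul_self X))) ^ 2 = (-X)ᴴ * (-X) := by
    rw [Matrix.conjTranspose_neg, Matrix.neg_mul, Matrix.mul_neg, neg_neg,
      (Matrix.posSemidef_conjTranspose_mul_self X).sq_sqrt]
  rw [traceNorm_eq_of (Matrix.posSemidef_conjTranspose_mul_self X).posSemidef_sqrt h]
  rfl

lemma traceNorm_smul (c : ℝ) (hc : 0 ≤ c) (X : Matrix ι ι ℂ) :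
    traceNorm (((c : ℝ) : ℂ) • X) = c * traceNorm X := by
  have hS := (Matrix.posSemidef_conjTranspose_mul_self X).posSemidef_sqrt
  set S := (posSemidefSqrt (Matrix.posSemidef_conjTranspose_mul_self X)) with hSdef
  have hcS : (((c : ℝ) : ℂ) • S).PosSemidef := by
    constructor
    · have := hS.1
      rw [Matrix.IsHermitian, Matrix.conjTranspose_smul, this]
      congr 1
      simp
    · intro x
      have h0 : (0 : ℂ) ≤ ((c : ℝ) : ℂ) := by
        rw [Complex.le_def]
        simp [hc]
      exact (hS.smul h0).2 x
  have hsq : (((c : ℝ) : ℂ) • S) ^ 2 = (((c : ℝ) : ℂ) • X)ᴴ * (((c : ℝ) : ℂ) • X) := by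
    rw [Matrix.conjTranspose_smul, Matrix.smul_mul, Matrix.mul_smul, pow_two,
      Matrix.smul_mul, Matrix.mul_smul, ← (Matrix.posSemidef_conjTranspose_mul_self X).sq_sqrt,
      pow_two]
    rw [smul_smul, smul_smul]
    congr 1
    simp [Complex.conj_ofReal]
  rw [traceNorm_eq_of hcS hsq, Matrix.trace_smul]
  simp [traceNorm, hSdef]

lemma traceNorm_sum_le {α : Type} (s : Finset α) (f : α → Matrix ι ι ℂ) :
    traceNorm (∑ k ∈ s, f k) ≤ ∑ k ∈ s, traceNorm (f k) := by
  classical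
  induction s using Finset.induction_on with
  | empty =>
      simp only [Finset.sum_empty]
      have : traceNorm (0 : Matrix ι ι ℂ) = 0 := by
        have h : ((0 : Matrix ι ι ℂ)) ^ 2 = (0 : Matrix ι ι ℂ)ᴴ * 0 := by
          simp [pow_two]
        rw [traceNorm_eq_of Matrix.PosSemidef.zero h]
        simp
      rw [this]
  | insert _ _ hx ih =>
      rw [Finset.sum_insert hx, Finset.sum_insert hx]
      calc traceNorm (_ + _) ≤ traceNorm _ + traceNorm _ := traceNorm_triangle _ _
        _ ≤ _ := by exact add_le_add (le_refl _) ih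

lemma traceNorm_conj_le {κ' : Type} [Fintype κ'] [DecidableEq κ']
    {a : ℝ} (ha : 0 ≤ a) {A : Matrix κ' ι ℂ} (hA : vGrow a A) (hAH : vGrow a Aᴴ)
    (X : Matrix ι ι ℂ) :
    traceNorm (A * X * Aᴴ) ≤ a ^ 2 * traceNorm X := by
  obtain ⟨U, hU, hXY⟩ := exists_unitary_traceNorm (A * X * Aᴴ)
  have h1 : traceNorm (A * X * Aᴴ) = ((A * X * Aᴴ * U).trace).re := by rw [hXY]; simp
  have h2 : (A * X * Aᴴ * U).trace = (X * (Aᴴ * (U * A))).trace := by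
    rw [Matrix.trace_mul_cycle (A * X) Aᴴ U, Matrix.trace_mul_cycle U (A * X) Aᴴ,
      ← Matrix.mul_assoc, Matrix.trace_mul_comm, Matrix.mul_assoc Aᴴ U A]
  have h3 : vGrow (a * (1 * a)) (Aᴴ * (U * A)) :=
    vGrow_mul ha hAH (vGrow_mul zero_le_one (vGrow_unitary hU) hA)
  calc traceNorm (A * X * Aᴴ) = ((X * (Aᴴ * (U * A))).trace).re := by rw [h1, h2]
    _ ≤ ‖(X * (Aᴴ * (U * A))).trace‖ := Complex.re_le_norm _
    _ ≤ (a * (1 * a)) * traceNorm X := hoelder (by positivity) h3 X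
    _ = a ^ 2 * traceNorm X := by ring

lemma traceNorm_zero : traceNorm (0 : Matrix ι ι ℂ) = 0 := by
  have h : ((0 : Matrix ι ι ℂ)) ^ 2 = (0 : Matrix ι ι ℂ)ᴴ * 0 := by simp [pow_two]
  rw [traceNorm_eq_of Matrix.PosSemidef.zero h]
  simp

lemma psd_smul {P : Matrix ι ι ℂ} (hP : P.PosSemidef) {c : ℝ} (hc : 0 ≤ c) :
    (((c : ℝ) : ℂ) • P).PosSemidef := by
  constructor
  · rw [Matrix.IsHermitian, Matrix.conjTranspose_smul, hP.1]
    congr 1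
    simp
  · intro x
    have h0 : (0 : ℂ) ≤ ((c : ℝ) : ℂ) := by rw [Complex.le_def]; simp [hc]
    exact (hP.smul h0).2 x

lemma traceNorm_conjTranspose (X : Matrix ι ι ℂ) : traceNorm Xᴴ = traceNorm X := by
  obtain ⟨U, hU, hpolar⟩ := exists_polar X
  have hPpsd := (Matrix.posSemidef_conjTranspose_mul_self X).posSemidef_sqrt
  set P := (posSemidefSqrt (Matrix.posSemidef_conjTranspose_mul_self X)) with hPdef
  have hPP : P * P = Xᴴ * X := (Matrix.posSemidef_conjTranspose_mul_self X).sqrt_mul_self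
  have hUU' : star U * U = 1 := (Matrix.mem_unitaryGroup_iff').mp hU
  have hS : (U * P * star U).PosSemidef := by
    have := hPpsd.mul_mul_conjTranspose_same U
    rwa [← Matrix.star_eq_conjTranspose] at this
  have hsq : (U * P * star U) ^ 2 = (Xᴴ)ᴴ * Xᴴ := by
    rw [Matrix.conjTranspose_conjTranspose, pow_two]
    calc U * P * star U * (U * P * star U)
        = U * P * (star U * U) * (P * star U) := by simp only [Matrix.mul_assoc]
      _ = U * (P * P) * star U := by
          rw [hUU']; simp only [Matrix.mul_one, Matrix.mul_assoc]
      _ = X * Xᴴ := by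
          rw [hpolar, Matrix.conjTranspose_mul,
            show Pᴴ = P from hPpsd.1, ← Matrix.star_eq_conjTranspose]
          simp only [Matrix.mul_assoc]
  rw [traceNorm_eq_of hS hsq]
  rw [Matrix.trace_mul_cycle, hUU', Matrix.one_mul]
  rfl

lemma vmv_mul (a b c d : ι → ℂ) :
    Matrix.vecMulVec a b * Matrix.vecMulVec c d = (b ⬝ᵥ c) • Matrix.vecMulVec a d := by
  ext i j
  rw [Matrix.mul_apply, Matrix.smul_apply, dotProduct, smul_eq_mul, Finset.sum_mul]
  apply Finset.sum_congr rfl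
  intro k _
  simp only [Matrix.vecMulVec_apply]
  ring

lemma vmv_trace (a b : ι → ℂ) : (Matrix.vecMulVec a b).trace = b ⬝ᵥ a := by
  rw [Matrix.trace, dotProduct]
  apply Finset.sum_congr rfl
  intro i _
  rw [Matrix.diag_apply, Matrix.vecMulVec_apply]
  ring

lemma vmv_herm (a : ι → ℂ) : (Matrix.vecMulVec a (star a)).IsHermitian := by
  rw [Matrix.IsHermitian]
  ext i j
  simp only [Matrix.conjTranspose_apply, Matrix.vecMulVec_apply, Pi.star_apply]
  simp [mul_comm]

lemma conj_dot_comm (u w : ι → ℂ) : star w ⬝ᵥ u = (starRingEnd ℂ) (star u ⬝ᵥ w) := by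
  simp only [dotProduct, map_sum]
  apply Finset.sum_congr rfl
  intro i _
  simp only [Pi.star_apply, _root_.map_mul, Complex.conj_conj, RCLike.star_def]
  ring

lemma vmv_psd (a : ι → ℂ) : (Matrix.vecMulVec a (star a)).PosSemidef :=
  Matrix.posSemidef_vecMulVec_self_star a

lemma normSq_dot_le_one {u w : ι → ℂ} (hu : vnsq u = 1) (hw : vnsq w = 1) :
    Complex.normSq (star u ⬝ᵥ w) ≤ 1 := by
  have h := abs_dot_le u w
  rw [hu, hw, Real.sqrt_one, one_mul] at h
  have := Complex.sq_norm (star u ⬝ᵥ w)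
  nlinarith [norm_nonneg (star u ⬝ᵥ w)]

lemma pure_fvg {u w : ι → ℂ} (hu : vnsq u = 1) (hw : vnsq w = 1) :
    traceNorm (Matrix.vecMulVec u (star u) - Matrix.vecMulVec w (star w))
      ≤ 2 * Real.sqrt (1 - Complex.normSq (star u ⬝ᵥ w)) := by
  set c : ℂ := star u ⬝ᵥ w with hcdef
  set lam : ℝ := 1 - Complex.normSq c with hlamdef
  have hlam0 : 0 ≤ lam := by
    rw [hlamdef]
    have := normSq_dot_le_one hu hw
    linarith
  set PP := Matrix.vecMulVec u (star u) with hPPdef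
  set QQ := Matrix.vecMulVec w (star w) with hQQdef
  set Mx := PP - QQ with hMxdef
  have hMH : Mx.IsHermitian := (vmv_herm u).sub (vmv_herm w)
  have huu : star u ⬝ᵥ u = 1 := by
    rw [dot_self_eq_vnsq, hu]; simp
  have hww : star w ⬝ᵥ w = 1 := by
    rw [dot_self_eq_vnsq, hw]; simp
  have hwu : star w ⬝ᵥ u = (starRingEnd ℂ) c := conj_dot_comm u w
  -- square of Mx
  have hM2 : Mx * Mx = PP + QQ - c • Matrix.vecMulVec u (star w)
      - ((starRingEnd ℂ) c) • Matrix.vecMulVec w (star u) := by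
    rw [hMxdef, Matrix.sub_mul, Matrix.mul_sub, Matrix.mul_sub, hPPdef, hQQdef]
    rw [vmv_mul, vmv_mul, vmv_mul, vmv_mul, huu, hww, hcdef, ← hcdef, hwu]
    rw [one_smul, one_smul]
    abel
  -- cube of Mx
  have hM3 : Mx * Mx * Mx = ((lam : ℝ) : ℂ) • Mx := by
    rw [show Mx * Mx * Mx = Mx * (Mx * Mx) by
      rw [Matrix.mul_assoc]]
    rw [hM2]
    rw [hMxdef, Matrix.sub_mul]
    rw [Matrix.mul_sub, Matrix.mul_sub, Matrix.mul_add, Matrix.mul_smul, Matrix.mul_smul,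
      Matrix.mul_sub, Matrix.mul_sub, Matrix.mul_add, Matrix.mul_smul, Matrix.mul_smul]
    rw [hPPdef, hQQdef, vmv_mul, vmv_mul, vmv_mul, vmv_mul, vmv_mul, vmv_mul, vmv_mul, vmv_mul]
    rw [huu, hww, hwu, ← hcdef]
    rw [one_smul, one_smul]
    have hexp : ((lam : ℝ) : ℂ) = 1 - c * (starRingEnd ℂ) c := by
      rw [hlamdef]
      push_cast
      rw [Complex.mul_conj]
    rw [hexp]
    module
  have hM4 : (Mx * Mx) * (Mx * Mx) = ((lam : ℝ) : ℂ) • (Mx * Mx) := by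
    calc (Mx * Mx) * (Mx * Mx) = (Mx * Mx * Mx) * Mx := by simp only [Matrix.mul_assoc]
      _ = (((lam : ℝ) : ℂ) • Mx) * Mx := by rw [hM3]
      _ = ((lam : ℝ) : ℂ) • (Mx * Mx) := by rw [Matrix.smul_mul]
  have hM2psd : (Mx * Mx).PosSemidef := by
    have h : Mx * Mx = Mxᴴ * Mx := by rw [hMH]
    rw [h]
    exact Matrix.posSemidef_conjTranspose_mul_self Mx
  have htr2 : (Mx * Mx).trace = ((2 * lam : ℝ) : ℂ) := by
    rw [hM2]
    rw [Matrix.trace_sub, Matrix.trace_sub, Matrix.trace_add, Matrix.trace_smul,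
      Matrix.trace_smul, hPPdef, hQQdef, vmv_trace, vmv_trace, vmv_trace, vmv_trace,
      huu, hww, hwu, ← hcdef]
    have hc2 : (starRingEnd ℂ) c • c = c * (starRingEnd ℂ) c := by
      rw [smul_eq_mul]; ring
    rw [hc2, smul_eq_mul, Complex.mul_conj]
    rw [hlamdef]
    push_cast
    ring
  by_cases hlz : lam = 0
  · -- Mx * Mx has zero trace, hence Mx = 0
    have h0 : Mxᴴ * Mx = Mx * Mx := by rw [hMH]
    have htr0 : (Mxᴴ * Mx).trace = 0 := by
      rw [h0, htr2, hlz]; simp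
    have hMx0 : Mx = 0 := by
      rw [trace_cms] at htr0
      have hr : (∑ j, ∑ i, Complex.normSq (Mx i j) : ℝ) = 0 := by exact_mod_cast htr0
      ext i j
      have h1 := (Finset.sum_eq_zero_iff_of_nonneg (fun j _ =>
        Finset.sum_nonneg fun i _ => Complex.normSq_nonneg (Mx i j))).mp hr j (Finset.mem_univ j)
      have h2 := (Finset.sum_eq_zero_iff_of_nonneg (fun i _ =>
        Complex.normSq_nonneg (Mx i j))).mp h1 i (Finset.mem_univ i)
      simpa using Complex.normSq_eq_zero.mp h2
    rw [hMx0, traceNorm_zero]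
    positivity
  · have hlpos : 0 < lam := lt_of_le_of_ne hlam0 (Ne.symm hlz)
    have hsqlam : 0 < Real.sqrt lam := Real.sqrt_pos.mpr hlpos
    set S := ((((Real.sqrt lam)⁻¹ : ℝ) : ℂ)) • (Mx * Mx) with hSdef
    have hSpsd : S.PosSemidef := psd_smul hM2psd (by positivity)
    have hSsq : S ^ 2 = Mxᴴ * Mx := by
      rw [pow_two, hSdef, Matrix.smul_mul, Matrix.mul_smul, smul_smul, hM4, smul_smul]
      rw [show Mxᴴ = Mx from hMH]
      rw [show (((Real.sqrt lam)⁻¹ : ℝ) : ℂ) * (((Real.sqrt lam)⁻¹ : ℝ) : ℂ) * ((lam : ℝ) : ℂ)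
          = (1 : ℂ) by
        push_cast
        rw [show ((lam : ℝ) : ℂ) = ((Real.sqrt lam : ℝ) : ℂ) * ((Real.sqrt lam : ℝ) : ℂ) by
          rw [← Complex.ofReal_mul, Real.mul_self_sqrt (le_of_lt hlpos)]]
        have hne : ((Real.sqrt lam : ℝ) : ℂ) ≠ 0 := by
          simp only [ne_eq, Complex.ofReal_eq_zero]
          positivity
        field_simp]
      rw [one_smul]
    have hTN : traceNorm Mx = 2 * Real.sqrt lam := by
      rw [traceNorm_eq_of hSpsd hSsq, hSdef, Matrix.trace_smul, htr2]
      rw [smul_eq_mul, ← Complex.ofReal_mul, Complex.ofReal_re]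
      rw [show (Real.sqrt lam)⁻¹ * (2 * lam) = 2 * ((lam / Real.sqrt lam)) by ring]
      rw [Real.div_sqrt]
    rw [hTN]

def ptr (X : Matrix (ι × κ) (ι × κ) ℂ) : Matrix ι ι ℂ :=
  Matrix.of fun i k => ∑ j, X (i, j) (k, j)

lemma kron_star (V : Matrix ι ι ℂ) :
    star (V ⊗ₖ (1 : Matrix κ κ ℂ)) = (star V) ⊗ₖ (1 : Matrix κ κ ℂ) := by
  ext p q
  by_cases h : p.2 = q.2
  · simp [Matrix.star_apply, Matrix.kroneckerMap_apply, Matrix.one_apply, h]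
  · have h' : ¬ q.2 = p.2 := fun hc => h hc.symm
    simp [Matrix.star_apply, Matrix.kroneckerMap_apply, Matrix.one_apply, h, h']

lemma kron_unitary {V : Matrix ι ι ℂ} (hV : V ∈ Matrix.unitaryGroup ι ℂ) :
    (V ⊗ₖ (1 : Matrix κ κ ℂ)) ∈ Matrix.unitaryGroup (ι × κ) ℂ := by
  rw [Matrix.mem_unitaryGroup_iff']
  rw [kron_star, ← Matrix.mul_kronecker_mul, (Matrix.mem_unitaryGroup_iff').mp hV,
    Matrix.one_mul, Matrix.one_kronecker_one]

lemma ptr_traceNorm_le (X : Matrix (ι × κ) (ι × κ) ℂ) : traceNorm (ptr X) ≤ traceNorm X := by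
  obtain ⟨V, hV, htr⟩ := exists_unitary_traceNorm (ptr X)
  set W := (V ⊗ₖ (1 : Matrix κ κ ℂ)) with hWdef
  have hW : W ∈ Matrix.unitaryGroup (ι × κ) ℂ := kron_unitary hV
  have hterm : ∀ i j, (X * W) (i, j) (i, j) = ∑ k, X (i, j) (k, j) * V k i := by
    intro i j
    rw [Matrix.mul_apply, Fintype.sum_prod_type]
    apply Finset.sum_congr rfl
    intro k _
    rw [Finset.sum_eq_single j]
    · rw [hWdef, Matrix.kroneckerMap_apply, Matrix.one_apply_eq]
      ring
    · intro l _ hl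
      rw [hWdef, Matrix.kroneckerMap_apply, Matrix.one_apply_ne hl, mul_zero, mul_zero]
    · intro h; exact absurd (Finset.mem_univ j) h
  have htrace : ((ptr X) * V).trace = (X * W).trace := by
    rw [Matrix.trace, Matrix.trace, Fintype.sum_prod_type]
    apply Finset.sum_congr rfl
    intro i _
    rw [Matrix.diag_apply, Matrix.mul_apply]
    calc ∑ k, ptr X i k * V k i = ∑ k, ∑ j, X (i, j) (k, j) * V k i := by
          apply Finset.sum_congr rfl
          intro k _
          rw [show ptr X i k = ∑ j, X (i, j) (k, j) from rfl, Finset.sum_mul]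
      _ = ∑ j, ∑ k, X (i, j) (k, j) * V k i := Finset.sum_comm
      _ = ∑ j, (X * W) (i, j) (i, j) := by
          apply Finset.sum_congr rfl
          intro j _
          rw [hterm i j]
      _ = ∑ j, (X * W).diag (i, j) := rfl
  calc traceNorm (ptr X) = ((ptr X) * V).trace.re := by rw [htr]; simp
    _ = ((X * W).trace).re := by rw [htrace]
    _ ≤ ‖(X * W).trace‖ := Complex.re_le_norm _
    _ ≤ 1 * traceNorm X := hoelder zero_le_one (vGrow_unitary hW) X
    _ = traceNorm X := one_mul _

lemma fvg {ρ σ : Matrix ι ι ℂ} (hρ : ρ.PosSemidef) (hρt : ρ.trace = 1)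
    (hσ : σ.PosSemidef) (hσt : σ.trace = 1) :
    traceNorm (ρ - σ) ≤ 2 * Real.sqrt (1 - fidelity ρ σ) := by
  set A := (posSemidefSqrt hρ) with hAdef
  set B := (posSemidefSqrt hσ) with hBdef
  have hAH : Aᴴ = A := hρ.posSemidef_sqrt.1
  have hBH : Bᴴ = B := hσ.posSemidef_sqrt.1
  have hAA : A * A = ρ := hρ.sqrt_mul_self
  have hBB : B * B = σ := hσ.sqrt_mul_self
  have hin : (A * σ * A).PosSemidef := by
    have := hσ.mul_mul_conjTranspose_same A
    rwa [hAH] at this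
  set sF := ((posSemidefSqrt hin)).trace.re with hsFdef
  have hsF0 : 0 ≤ sF := psd_trace_re_nonneg hin.posSemidef_sqrt
  have hfid : fidelity ρ σ = sF ^ 2 := by
    rw [fidelity, show matSqrt ρ = A from dif_pos hρ,
      show matSqrt (A * σ * A) = (posSemidefSqrt hin) from dif_pos hin]
  have hBA : traceNorm (B * A) = sF := by
    rw [traceNorm_eq_of hin.posSemidef_sqrt]
    rw [hin.sq_sqrt, Matrix.conjTranspose_mul, hAH, hBH, ← hBB]
    simp only [Matrix.mul_assoc]
  have hAB : traceNorm (A * B) = sF := by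
    rw [← hBA, ← traceNorm_conjTranspose (A * B), Matrix.conjTranspose_mul, hAH, hBH]
  obtain ⟨U, hU, htrU⟩ := exists_unitary_traceNorm (A * B)
  set ψ : ι × ι → ℂ := fun p => A p.1 p.2 with hψdef
  set φ : ι × ι → ℂ := fun p => (B * U) p.1 p.2 with hφdef
  have hψ1 : vnsq ψ = 1 := by
    have h2 : (Aᴴ * A).trace.re = 1 := by rw [hAH, hAA, hρt]; simp
    rw [trace_cms_re] at h2
    rw [vnsq, Fintype.sum_prod_type, ← h2]
    exact Finset.sum_comm
  have hφ1 : vnsq φ = 1 := by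
    have hBU : (B * U)ᴴ * (B * U) = star U * σ * U := by
      rw [Matrix.conjTranspose_mul, hBH, ← Matrix.star_eq_conjTranspose, ← hBB]
      simp only [Matrix.mul_assoc]
    have h2 : ((B * U)ᴴ * (B * U)).trace.re = 1 := by
      rw [hBU, Matrix.trace_mul_cycle, (Matrix.mem_unitaryGroup_iff).mp hU,
        Matrix.one_mul, hσt]
      simp
    rw [trace_cms_re] at h2
    rw [vnsq, Fintype.sum_prod_type, ← h2]
    exact Finset.sum_comm
  have hc : star ψ ⬝ᵥ φ = ((sF : ℝ) : ℂ) := by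
    have h3 : star ψ ⬝ᵥ φ = (Aᴴ * (B * U)).trace := by
      rw [dotProduct, Matrix.trace, Fintype.sum_prod_type, Finset.sum_comm]
      apply Finset.sum_congr rfl
      intro j _
      rw [Matrix.diag_apply, Matrix.mul_apply]
      apply Finset.sum_congr rfl
      intro i _
      rw [Matrix.conjTranspose_apply]
      rfl
    rw [h3, hAH, ← Matrix.mul_assoc, htrU, hAB]
  have hpure := pure_fvg hψ1 hφ1
  have hns : Complex.normSq (star ψ ⬝ᵥ φ) = fidelity ρ σ := by
    rw [hc, Complex.normSq_ofReal, hfid, pow_two]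
  have hptr : ptr (Matrix.vecMulVec ψ (star ψ) - Matrix.vecMulVec φ (star φ)) = ρ - σ := by
    ext i k
    rw [show ptr (Matrix.vecMulVec ψ (star ψ) - Matrix.vecMulVec φ (star φ)) i k
        = ∑ j, ((Matrix.vecMulVec ψ (star ψ)) ((i,j)) ((k,j))
          - (Matrix.vecMulVec φ (star φ)) ((i,j)) ((k,j))) from rfl]
    rw [Finset.sum_sub_distrib]
    have h1 : ∑ j, (Matrix.vecMulVec ψ (star ψ)) ((i,j)) ((k,j)) = ρ i k := by
      rw [← hAA]
      rw [show (A * A) i k = (A * Aᴴ) i k by rw [hAH]]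
      rw [Matrix.mul_apply]
      apply Finset.sum_congr rfl
      intro j _
      rw [Matrix.vecMulVec_apply, Matrix.conjTranspose_apply]
      rfl
    have h2 : ∑ j, (Matrix.vecMulVec φ (star φ)) ((i,j)) ((k,j)) = σ i k := by
      have hBUU : (B * U) * (B * U)ᴴ = σ := by
        rw [Matrix.conjTranspose_mul, hBH, ← Matrix.star_eq_conjTranspose]
        calc B * U * (star U * B) = B * (U * star U) * B := by simp only [Matrix.mul_assoc]
          _ = σ := by rw [(Matrix.mem_unitaryGroup_iff).mp hU, Matrix.mul_one, hBB]
      rw [← hBUU, Matrix.mul_apply]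
      apply Finset.sum_congr rfl
      intro j _
      rw [Matrix.vecMulVec_apply, Matrix.conjTranspose_apply]
      rfl
    rw [h1, h2]
    rfl
  calc traceNorm (ρ - σ)
      = traceNorm (ptr (Matrix.vecMulVec ψ (star ψ) - Matrix.vecMulVec φ (star φ))) := by
        rw [hptr]
    _ ≤ traceNorm (Matrix.vecMulVec ψ (star ψ) - Matrix.vecMulVec φ (star φ)) :=
        ptr_traceNorm_le _
    _ ≤ 2 * Real.sqrt (1 - Complex.normSq (star ψ ⬝ᵥ φ)) := hpure
    _ = 2 * Real.sqrt (1 - fidelity ρ σ) := by rw [hns]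

-- linearity consequences

section Lin

variable {ι₀ ι₁ : Type} {L : MatMap ι₀ ι₁}

lemma lin_zero (hL : IsLinearFun L) : L 0 = 0 := by
  have h := hL 1 0 0
  rw [one_smul, add_zero, one_smul] at h
  exact (left_eq_add.mp h)

lemma lin_add (hL : IsLinearFun L) (X Y : Matrix ι₀ ι₀ ℂ) : L (X + Y) = L X + L Y := by
  have h := hL 1 X Y
  rwa [one_smul, one_smul] at h

lemma lin_smul (hL : IsLinearFun L) (c : ℂ) (X : Matrix ι₀ ι₀ ℂ) : L (c • X) = c • L X := by
  have h := hL c X 0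
  rwa [add_zero, lin_zero hL, add_zero] at h

lemma lin_sum (hL : IsLinearFun L) {α : Type} (s : Finset α) (f : α → Matrix ι₀ ι₀ ℂ) :
    L (∑ k ∈ s, f k) = ∑ k ∈ s, L (f k) := by
  classical
  induction s using Finset.induction_on with
  | empty => simp [lin_zero hL]
  | insert _ _ hx ih =>
      rw [Finset.sum_insert hx, Finset.sum_insert hx, lin_add hL, ih]

lemma lin_expand [Fintype ι₀] [DecidableEq ι₀] (hL : IsLinearFun L) (X : Matrix ι₀ ι₀ ℂ) :
    L X = ∑ i : ι₀, ∑ k : ι₀, X i k • L (Matrix.single i k 1) := by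
  conv_lhs => rw [Matrix.matrix_eq_sum_single X]
  rw [lin_sum hL]
  apply Finset.sum_congr rfl
  intro i _
  rw [lin_sum hL]
  apply Finset.sum_congr rfl
  intro k _
  rw [show Matrix.single i k (X i k) = X i k • Matrix.single i k 1 by
    rw [Matrix.smul_single, smul_eq_mul, mul_one]]
  rw [lin_smul hL]

end Lin

section TId

variable {ι₀ ι₁ ρt : Type} [Fintype ι₀] [Fintype ι₁] [Fintype ρt] {L : MatMap ι₀ ι₁}

lemma tensorIdT_slice_add (X Y : Matrix (ι₀ × ρt) (ι₀ × ρt) ℂ) (p q : ρt) :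
    (Matrix.of fun i j => (X + Y) (i, p) (j, q))
      = (Matrix.of fun i j => X (i, p) (j, q)) + (Matrix.of fun i j => Y (i, p) (j, q)) := rfl

lemma tensorIdT_add (hL : IsLinearFun L) (X Y : Matrix (ι₀ × ρt) (ι₀ × ρt) ℂ) :
    tensorIdT L (X + Y) = tensorIdT L X + tensorIdT L Y := by
  ext p q
  show L _ p.1 q.1 = _
  rw [tensorIdT_slice_add X Y p.2 q.2, lin_add hL]
  rfl

lemma tensorIdT_zero (hL : IsLinearFun L) :
    tensorIdT L (0 : Matrix (ι₀ × ρt) (ι₀ × ρt) ℂ) = 0 := by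
  ext p q
  show L (Matrix.of fun i j => (0 : Matrix (ι₀ × ρt) (ι₀ × ρt) ℂ) (i, p.2) (j, q.2)) p.1 q.1 = 0
  rw [show (Matrix.of fun i j => (0 : Matrix (ι₀ × ρt) (ι₀ × ρt) ℂ) (i, p.2) (j, q.2))
      = (0 : Matrix ι₀ ι₀ ℂ) from rfl, lin_zero hL]
  rfl

lemma tensorIdT_sum (hL : IsLinearFun L) {α : Type} (s : Finset α)
    (f : α → Matrix (ι₀ × ρt) (ι₀ × ρt) ℂ) :
    tensorIdT L (∑ k ∈ s, f k) = ∑ k ∈ s, tensorIdT L (f k) := by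
  classical
  induction s using Finset.induction_on with
  | empty => simp [tensorIdT_zero hL]
  | insert _ _ hx ih =>
      rw [Finset.sum_insert hx, Finset.sum_insert hx, tensorIdT_add hL, ih]

lemma tensorIdT_sub (N M : MatMap ι₀ ι₁) (X : Matrix (ι₀ × ρt) (ι₀ × ρt) ℂ) :
    tensorIdT (fun Y => N Y - M Y) X = tensorIdT N X - tensorIdT M X := rfl

lemma tensorIdT_trace (hT : IsTracePreserving L) (X : Matrix (ι₀ × ρt) (ι₀ × ρt) ℂ) :
    (tensorIdT L X).trace = X.trace := by
  rw [Matrix.trace, Matrix.trace, Fintype.sum_prod_type, Finset.sum_comm]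
  rw [show (∑ j : ρt, ∑ a : ι₁, (tensorIdT L X).diag (a, j))
      = ∑ j : ρt, (L (Matrix.of fun i k => X (i, j) (k, j))).trace from rfl]
  rw [Fintype.sum_prod_type, Finset.sum_comm]
  apply Finset.sum_congr rfl
  intro j _
  rw [hT]
  rfl

end TId

-- maximally entangled state

def mev (d : ℕ) : (Fin d × Fin d) → ℂ :=
  fun p => if p.1 = p.2 then ((((Real.sqrt d)⁻¹ : ℝ)) : ℂ) else 0

lemma maxEnt_eq_vmv (d : ℕ) :
    maxEntangled d d d = Matrix.vecMulVec (mev d) (star (mev d)) := by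
  ext p q
  rw [Matrix.vecMulVec_apply, Pi.star_apply]
  rw [show maxEntangled d d d p q = if (p.1 : ℕ) = (p.2 : ℕ) ∧ (q.1 : ℕ) = (q.2 : ℕ)
      ∧ (p.1 : ℕ) < d ∧ (q.1 : ℕ) < d then (1 / d : ℂ) else 0 from rfl]
  rw [mev, mev]
  have hp : ((p.1 : ℕ) < d) := p.1.isLt
  have hq : ((q.1 : ℕ) < d) := q.1.isLt
  by_cases h1 : p.1 = p.2 <;> by_cases h2 : q.1 = q.2
  · rw [if_pos ⟨by rw [h1], by rw [h2], hp, hq⟩, if_pos h1, if_pos h2]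
    rw [RCLike.star_def, Complex.conj_ofReal, ← Complex.ofReal_mul]
    have hr : ((Real.sqrt d)⁻¹ * (Real.sqrt d)⁻¹ : ℝ) = 1 / (d : ℝ) := by
      rw [← mul_inv, Real.mul_self_sqrt (Nat.cast_nonneg d), one_div]
    rw [hr]
    push_cast
    ring
  · rw [if_neg (by rintro ⟨-, h, -, -⟩; exact h2 (Fin.val_injective h)), if_pos h1, if_neg h2]
    simp
  · rw [if_neg (by rintro ⟨h, -, -, -⟩; exact h1 (Fin.val_injective h)), if_neg h1]
    simp
  · rw [if_neg (by rintro ⟨h, -, -, -⟩; exact h1 (Fin.val_injective h)), if_neg h1]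
    simp

lemma maxEnt_psd (d : ℕ) : (maxEntangled d d d).PosSemidef := by
  rw [maxEnt_eq_vmv]
  exact vmv_psd _

lemma maxEnt_trace {d : ℕ} (hd : d ≠ 0) : (maxEntangled d d d).trace = 1 := by
  rw [Matrix.trace, Fintype.sum_prod_type]
  have hterm : ∀ i k : Fin d, (maxEntangled d d d).diag (i, k)
      = if i = k then (1 / d : ℂ) else 0 := by
    intro i k
    rw [Matrix.diag_apply]
    rw [show maxEntangled d d d (i, k) (i, k) = if (i : ℕ) = (k : ℕ) ∧ (i : ℕ) = (k : ℕ)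
        ∧ (i : ℕ) < d ∧ (i : ℕ) < d then (1 / d : ℂ) else 0 from rfl]
    by_cases h : i = k
    · rw [if_pos ⟨by rw [h], by rw [h], i.isLt, i.isLt⟩, if_pos h]
    · rw [if_neg (by rintro ⟨hh, -, -, -⟩; exact h (Fin.val_injective hh)), if_neg h]
  calc ∑ i : Fin d, ∑ k : Fin d, (maxEntangled d d d).diag (i, k)
      = ∑ i : Fin d, ∑ k : Fin d, (if i = k then (1 / d : ℂ) else 0) := by
        apply Finset.sum_congr rfl; intro i _
        apply Finset.sum_congr rfl; intro k _
        exact hterm i k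
    _ = ∑ _i : Fin d, (1 / d : ℂ) := by
        apply Finset.sum_congr rfl; intro i _
        simp
    _ = 1 := by
        rw [Finset.sum_const, Finset.card_univ, Fintype.card_fin, nsmul_eq_mul]
        have : ((d : ℂ)) ≠ 0 := Nat.cast_ne_zero.mpr hd
        field_simp

-- grow bounds for 1 ⊗ₖ R

lemma vGrow_one_kron {κ₁ κ₂ : Type} [Fintype κ₁] [DecidableEq κ₁] [Fintype κ₂] [DecidableEq κ₂]
    (R : Matrix κ₁ κ₂ ℂ) :
    vGrow (Real.sqrt (∑ j, ∑ i, Complex.normSq (R j i))) ((1 : Matrix ι ι ℂ) ⊗ₖ R) := by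
  intro v
  rw [← Real.sqrt_mul (Finset.sum_nonneg fun (j : κ₁) _ => Finset.sum_nonneg fun (i : κ₂) _ =>
    Complex.normSq_nonneg (R j i))]
  apply Real.sqrt_le_sqrt
  have hmv : ∀ (a : ι) (j : κ₁), (((1 : Matrix ι ι ℂ) ⊗ₖ R) *ᵥ v) (a, j)
      = star (fun i => (starRingEnd ℂ) (R j i)) ⬝ᵥ (fun i => v (a, i)) := by
    intro a j
    have h0 : (((1 : Matrix ι ι ℂ) ⊗ₖ R) *ᵥ v) (a, j)
        = ∑ w : ι × κ₂, ((1 : Matrix ι ι ℂ) ⊗ₖ R) (a, j) w * v w := rfl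
    rw [h0, Fintype.sum_prod_type]
    rw [Finset.sum_eq_single a]
    · rw [dotProduct]
      apply Finset.sum_congr rfl
      intro i _
      show (1 : Matrix ι ι ℂ) a a * R j i * v (a, i) = _
      rw [Matrix.one_apply_eq, one_mul]
      simp
    · intro b _ hb
      apply Finset.sum_eq_zero
      intro i _
      show (1 : Matrix ι ι ℂ) a b * R j i * v (b, i) = 0
      rw [Matrix.one_apply_ne (Ne.symm hb), zero_mul, zero_mul]
    · intro h; exact absurd (Finset.mem_univ a) h
  have hbound : ∀ (a : ι) (j : κ₁),
      Complex.normSq ((((1 : Matrix ι ι ℂ) ⊗ₖ R) *ᵥ v) (a, j))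
        ≤ (∑ i, Complex.normSq (R j i)) * (∑ i, Complex.normSq (v (a, i))) := by
    intro a j
    rw [hmv a j]
    have h := abs_dot_le (fun i => (starRingEnd ℂ) (R j i)) (fun i => v (a, i))
    have h2 : Complex.normSq (star (fun i => (starRingEnd ℂ) (R j i)) ⬝ᵥ (fun i => v (a, i)))
        ≤ (Real.sqrt (vnsq fun i => (starRingEnd ℂ) (R j i))
            * Real.sqrt (vnsq fun i => v (a, i))) ^ 2 := by
      rw [← Complex.sq_norm]
      apply sq_le_sq' _ h
      nlinarith [norm_nonneg (star (fun i => (starRingEnd ℂ) (R j i)) ⬝ᵥ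
        (fun i => v (a, i)))]
    calc Complex.normSq (star (fun i => (starRingEnd ℂ) (R j i)) ⬝ᵥ (fun i => v (a, i)))
        ≤ (Real.sqrt (vnsq fun i => (starRingEnd ℂ) (R j i))
            * Real.sqrt (vnsq fun i => v (a, i))) ^ 2 := h2
      _ = vnsq (fun i => (starRingEnd ℂ) (R j i)) * vnsq (fun i => v (a, i)) := by
          rw [mul_pow, Real.sq_sqrt (vnsq_nonneg _), Real.sq_sqrt (vnsq_nonneg _)]
      _ = (∑ i, Complex.normSq (R j i)) * (∑ i, Complex.normSq (v (a, i))) := by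
          have hv1 : vnsq (fun i => (starRingEnd ℂ) (R j i)) = ∑ i, Complex.normSq (R j i) := by
            unfold vnsq
            apply Finset.sum_congr rfl
            intro i _
            simp
          have hv2 : vnsq (fun i => v (a, i)) = ∑ i, Complex.normSq (v (a, i)) := rfl
          rw [hv1, hv2]
  calc vnsq (((1 : Matrix ι ι ℂ) ⊗ₖ R) *ᵥ v)
      = ∑ a : ι, ∑ j : κ₁, Complex.normSq ((((1 : Matrix ι ι ℂ) ⊗ₖ R) *ᵥ v) (a, j)) := by
        rw [vnsq, Fintype.sum_prod_type]
    _ ≤ ∑ a : ι, ∑ j : κ₁, (∑ i, Complex.normSq (R j i)) * (∑ i, Complex.normSq (v (a, i))) :=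
        Finset.sum_le_sum fun a _ => Finset.sum_le_sum fun j _ => hbound a j
    _ = (∑ j, ∑ i, Complex.normSq (R j i)) * vnsq v := by
        have hv : vnsq v = ∑ a : ι, ∑ i, Complex.normSq (v (a, i)) := by
          rw [vnsq, Fintype.sum_prod_type]
        rw [hv, Finset.mul_sum]
        apply Finset.sum_congr rfl
        intro a _
        exact (Finset.sum_mul _ _ _).symm

lemma kron_one_ct {κ₁ κ₂ : Type} [Fintype κ₁] [DecidableEq κ₁] [Fintype κ₂] [DecidableEq κ₂]
    (R : Matrix κ₁ κ₂ ℂ) :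
    ((1 : Matrix ι ι ℂ) ⊗ₖ R)ᴴ = (1 : Matrix ι ι ℂ) ⊗ₖ Rᴴ := by
  ext p q
  rw [Matrix.conjTranspose_apply, Matrix.kroneckerMap_apply, Matrix.kroneckerMap_apply,
    Matrix.conjTranspose_apply]
  by_cases h : p.1 = q.1
  · rw [show ((1 : Matrix ι ι ℂ) q.1 p.1) = 1 by rw [← h, Matrix.one_apply_eq],
      show ((1 : Matrix ι ι ℂ) p.1 q.1) = 1 by rw [h, Matrix.one_apply_eq]]
    simp
  · rw [Matrix.one_apply_ne h, Matrix.one_apply_ne (fun hc => h hc.symm)]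
    simp

lemma frob_ct {κ₁ κ₂ : Type} [Fintype κ₁] [Fintype κ₂] (R : Matrix κ₁ κ₂ ℂ) :
    (∑ i, ∑ j, Complex.normSq (Rᴴ i j)) = ∑ j, ∑ i, Complex.normSq (R j i) := by
  rw [Finset.sum_comm]
  apply Finset.sum_congr rfl
  intro j _
  apply Finset.sum_congr rfl
  intro i _
  rw [Matrix.conjTranspose_apply]
  simp

lemma choi_factor {d d' r : ℕ} {Λ : MatMap (Fin d) (Fin d')} (hΛ : IsLinearFun Λ)
    (hd : d ≠ 0) (g : (Fin d × Fin r) → ℂ) :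
    tensorIdT Λ (Matrix.vecMulVec g (star g))
      = (d : ℂ) • (((1 : Matrix (Fin d') (Fin d') ℂ)
            ⊗ₖ (Matrix.of fun (j : Fin r) (i : Fin d) => g (i, j)))
          * tensorIdT Λ (maxEntangled d d d)
          * ((1 : Matrix (Fin d') (Fin d') ℂ)
            ⊗ₖ (Matrix.of fun (j : Fin r) (i : Fin d) => g (i, j)))ᴴ) := by
  set R : Matrix (Fin r) (Fin d) ℂ := Matrix.of fun j i => g (i, j) with hRdef
  set IR := ((1 : Matrix (Fin d') (Fin d') ℂ) ⊗ₖ R) with hIRdef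
  set J := tensorIdT Λ (maxEntangled d d d) with hJdef
  have hdc : (d : ℂ) ≠ 0 := Nat.cast_ne_zero.mpr hd
  have hIRapp : ∀ (a a' : Fin d') (j : Fin r) (i : Fin d),
      IR (a, j) (a', i) = (if a = a' then R j i else 0) := by
    intro a a' j i
    rw [hIRdef, Matrix.kroneckerMap_apply, Matrix.one_apply]
    by_cases h : a = a' <;> simp [h]
  have hJapp : ∀ (a b : Fin d') (i k : Fin d),
      J (a, i) (b, k) = (d : ℂ)⁻¹ * Λ (Matrix.single i k 1) a b := by
    intro a b i k
    rw [hJdef]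
    rw [show tensorIdT Λ (maxEntangled d d d) (a, i) (b, k)
        = Λ (Matrix.of fun i' k' => maxEntangled d d d (i', i) (k', k)) a b from rfl]
    have hs : (Matrix.of fun i' k' => maxEntangled d d d (i', i) (k', k))
        = (d : ℂ)⁻¹ • Matrix.single i k 1 := by
      ext i' k'
      rw [Matrix.of_apply, Matrix.smul_apply]
      rw [show maxEntangled d d d (i', i) (k', k)
          = if (i' : ℕ) = (i : ℕ) ∧ (k' : ℕ) = (k : ℕ) ∧ (i' : ℕ) < d ∧ (k' : ℕ) < d
            then (1 / d : ℂ) else 0 from rfl]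
      rw [show Matrix.single i k (1 : ℂ) i' k'
          = if i = i' ∧ k = k' then (1 : ℂ) else 0 from rfl]
      by_cases h1 : i = i' <;> by_cases h2 : k = k'
      · rw [if_pos ⟨by rw [h1], by rw [h2], i'.isLt, k'.isLt⟩, if_pos ⟨h1, h2⟩]
        rw [smul_eq_mul, mul_one, one_div]
      · rw [if_neg (by rintro ⟨-, hh, -, -⟩; exact h2 (Fin.val_injective hh).symm),
          if_neg (by rintro ⟨-, hh⟩; exact h2 hh)]
        rw [smul_eq_mul, mul_zero]
      · rw [if_neg (by rintro ⟨hh, -, -, -⟩; exact h1 (Fin.val_injective hh).symm),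
          if_neg (by rintro ⟨hh, -⟩; exact h1 hh)]
        rw [smul_eq_mul, mul_zero]
      · rw [if_neg (by rintro ⟨hh, -, -, -⟩; exact h1 (Fin.val_injective hh).symm),
          if_neg (by rintro ⟨hh, -⟩; exact h1 hh)]
        rw [smul_eq_mul, mul_zero]
    rw [hs, lin_smul hΛ, Matrix.smul_apply, smul_eq_mul]
  ext p q
  obtain ⟨a, j⟩ := p
  obtain ⟨b, l⟩ := q
  have hLHS : tensorIdT Λ (Matrix.vecMulVec g (star g)) (a, j) (b, l)
      = ∑ i : Fin d, ∑ k : Fin d, (g (i, j) * (starRingEnd ℂ) (g (k, l)))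
          * Λ (Matrix.single i k 1) a b := by
    rw [show tensorIdT Λ (Matrix.vecMulVec g (star g)) (a, j) (b, l)
        = Λ (Matrix.of fun i k => g (i, j) * (starRingEnd ℂ) (g (k, l))) a b from rfl]
    rw [lin_expand hΛ]
    rw [Matrix.sum_apply]
    apply Finset.sum_congr rfl
    intro i _
    rw [Matrix.sum_apply]
    apply Finset.sum_congr rfl
    intro k _
    rw [Matrix.smul_apply, Matrix.of_apply, smul_eq_mul]
  have hIJ : ∀ (w : Fin d' × Fin d), (IR * J) (a, j) w = ∑ i, R j i * J (a, i) w := by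
    intro w
    rw [Matrix.mul_apply, Fintype.sum_prod_type]
    rw [Finset.sum_eq_single a]
    · apply Finset.sum_congr rfl
      intro i _
      rw [hIRapp, if_pos rfl]
    · intro a' _ ha'
      apply Finset.sum_eq_zero
      intro i _
      rw [hIRapp, if_neg (Ne.symm ha'), zero_mul]
    · intro h; exact absurd (Finset.mem_univ a) h
  have hRHS : (IR * J * IRᴴ) (a, j) (b, l)
      = ∑ k, (∑ i, R j i * J (a, i) (b, k)) * (starRingEnd ℂ) (R l k) := by
    rw [Matrix.mul_apply, Fintype.sum_prod_type]
    rw [Finset.sum_eq_single b]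
    · apply Finset.sum_congr rfl
      intro k _
      rw [Matrix.conjTranspose_apply, hIRapp, if_pos rfl, hIJ]
      rfl
    · intro b' _ hb'
      apply Finset.sum_eq_zero
      intro k _
      rw [Matrix.conjTranspose_apply, hIRapp, if_neg (Ne.symm hb')]
      simp
    · intro h; exact absurd (Finset.mem_univ b) h
  rw [Matrix.smul_apply, hRHS, hLHS, Finset.smul_sum, Finset.sum_comm]
  apply Finset.sum_congr rfl
  intro k _
  rw [smul_eq_mul, Finset.sum_mul, Finset.mul_sum]
  apply Finset.sum_congr rfl
  intro i _
  rw [hJapp a b i k]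
  rw [show R j i = g (i, j) from rfl, show R l k = g (k, l) from rfl]
  field_simp

lemma key_bound {d d' r : ℕ} {Λ : MatMap (Fin d) (Fin d')} (hΛ : IsLinearFun Λ)
    (hd : d ≠ 0) (ρ : Matrix ((Fin d) × Fin r) ((Fin d) × Fin r) ℂ)
    (hρ : ρ.PosSemidef) (hρt : ρ.trace = 1) :
    traceNorm (tensorIdT Λ ρ) ≤ (d : ℝ) * traceNorm (tensorIdT Λ (maxEntangled d d d)) := by
  set J := tensorIdT Λ (maxEntangled d d d) with hJdef
  have hTJ0 : 0 ≤ traceNorm J := traceNorm_nonneg' J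
  set G := (posSemidefSqrt hρ) with hGdef
  have hGH : Gᴴ = G := hρ.posSemidef_sqrt.1
  have hGG : G * G = ρ := hρ.sqrt_mul_self
  set g : (Fin d × Fin r) → ((Fin d × Fin r) → ℂ) := fun k => (fun p => G p k) with hgdef
  have hdecomp : ρ = ∑ k, Matrix.vecMulVec (g k) (star (g k)) := by
    ext p q
    rw [Matrix.sum_apply, ← hGG, show (G * G) p q = (G * Gᴴ) p q by rw [hGH],
      Matrix.mul_apply]
    apply Finset.sum_congr rfl
    intro k _
    rw [Matrix.vecMulVec_apply, Matrix.conjTranspose_apply]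
    rfl
  have hnorm : ∑ k, vnsq (g k) = 1 := by
    have h2 : (Gᴴ * G).trace.re = 1 := by rw [hGH, hGG, hρt]; simp
    rw [trace_cms_re] at h2
    rw [← h2]
    apply Finset.sum_congr rfl
    intro k _
    rfl
  have hcol : ∀ k, traceNorm (tensorIdT Λ (Matrix.vecMulVec (g k) (star (g k))))
      ≤ (d : ℝ) * vnsq (g k) * traceNorm J := by
    intro k
    rw [choi_factor hΛ hd (g k), ← hJdef]
    set R : Matrix (Fin r) (Fin d) ℂ := Matrix.of fun jj ii => g k (ii, jj) with hRdef
    have hfr : (∑ j, ∑ i, Complex.normSq (R j i)) = vnsq (g k) := by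
      rw [vnsq, Fintype.sum_prod_type]
      exact Finset.sum_comm
    have hg1 : vGrow (Real.sqrt (vnsq (g k))) ((1 : Matrix (Fin d') (Fin d') ℂ) ⊗ₖ R) := by
      have := vGrow_one_kron (ι := Fin d') R
      rwa [hfr] at this
    have hg2 : vGrow (Real.sqrt (vnsq (g k)))
        (((1 : Matrix (Fin d') (Fin d') ℂ) ⊗ₖ R)ᴴ) := by
      rw [kron_one_ct]
      have := vGrow_one_kron (ι := Fin d') Rᴴ
      rwa [frob_ct, hfr] at this
    have hsm : traceNorm ((d : ℂ) • (((1 : Matrix (Fin d') (Fin d') ℂ) ⊗ₖ R) * J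
          * ((1 : Matrix (Fin d') (Fin d') ℂ) ⊗ₖ R)ᴴ))
        = (d : ℝ) * traceNorm (((1 : Matrix (Fin d') (Fin d') ℂ) ⊗ₖ R) * J
          * ((1 : Matrix (Fin d') (Fin d') ℂ) ⊗ₖ R)ᴴ) := by
      rw [show ((d : ℂ)) = (((d : ℝ) : ℝ) : ℂ) by push_cast; rfl]
      exact traceNorm_smul _ (Nat.cast_nonneg d) _
    rw [hsm]
    have hconj := traceNorm_conj_le (Real.sqrt_nonneg (vnsq (g k))) hg1 hg2 J
    rw [Real.sq_sqrt (vnsq_nonneg _)] at hconj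
    calc (d : ℝ) * traceNorm (((1 : Matrix (Fin d') (Fin d') ℂ) ⊗ₖ R) * J
          * ((1 : Matrix (Fin d') (Fin d') ℂ) ⊗ₖ R)ᴴ)
        ≤ (d : ℝ) * (vnsq (g k) * traceNorm J) := by
          exact mul_le_mul_of_nonneg_left hconj (Nat.cast_nonneg d)
      _ = (d : ℝ) * vnsq (g k) * traceNorm J := by ring
  calc traceNorm (tensorIdT Λ ρ)
      = traceNorm (∑ k, tensorIdT Λ (Matrix.vecMulVec (g k) (star (g k)))) := by
        rw [← tensorIdT_sum hΛ, ← hdecomp]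
    _ ≤ ∑ k, traceNorm (tensorIdT Λ (Matrix.vecMulVec (g k) (star (g k)))) :=
        traceNorm_sum_le _ _
    _ ≤ ∑ k, (d : ℝ) * vnsq (g k) * traceNorm J :=
        Finset.sum_le_sum fun k _ => hcol k
    _ = (d : ℝ) * traceNorm J * (∑ k, vnsq (g k)) := by
        rw [Finset.mul_sum]
        apply Finset.sum_congr rfl
        intro k _
        ring
    _ = (d : ℝ) * traceNorm J := by rw [hnorm, mul_one]


end AuxProofs


section Statements


variable {α₀ β₀ α₁ β₁ α₀' β₀' α₁' β₁' : Type}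
variable [Fintype α₀] [DecidableEq α₀] [Fintype β₀] [DecidableEq β₀]
variable [Fintype α₁] [DecidableEq α₁] [Fintype β₁] [DecidableEq β₁]
variable [Fintype α₀'] [DecidableEq α₀'] [Fintype β₀'] [DecidableEq β₀']
variable [Fintype α₁'] [DecidableEq α₁'] [Fintype β₁'] [DecidableEq β₁']

theorem stmt12 (d d' : ℕ) (N M : MatMap (Fin d) (Fin d'))
    (hN : IsChannel N) (hM : IsChannel M) (ε : ℝ) (hε : 0 ≤ ε)
    (hF : 1 - ε ≤ fidelity (choi1 N) (choi1 M)) :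
    (1/2) * diamondNorm (fun X => N X - M X) ≤ (d : ℝ) * Real.sqrt ε := by
  have hsup : diamondNorm (fun X => N X - M X) ≤ 2 * ((d : ℝ) * Real.sqrt ε) := by
    apply Real.sSup_le _ (by positivity)
    rintro t ⟨r, ρ, hpsd, htr, rfl⟩
    by_cases hd : d = 0
    · exfalso
      subst hd
      have h0 : ρ.trace = 0 := by
        rw [Matrix.trace]
        apply Finset.sum_eq_zero
        intro p _
        exact (Fin.elim0 p.1)
      rw [htr] at h0
      exact one_ne_zero h0
    · have hΛ : IsLinearFun (fun X => N X - M X) := by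
        intro c X Y
        simp only []
        rw [hN.1 c X Y, hM.1 c X Y]
        module
      have hkey := key_bound hΛ hd ρ hpsd htr
      have hJd : tensorIdT (fun X => N X - M X) (maxEntangled d d d) = choi1 N - choi1 M :=
        tensorIdT_sub N M _
      have hchoiN_psd : (choi1 N).PosSemidef := hN.2.1 d _ (maxEnt_psd d)
      have hchoiM_psd : (choi1 M).PosSemidef := hM.2.1 d _ (maxEnt_psd d)
      have hchoiN_tr : (choi1 N).trace = 1 := by
        rw [choi1, tensorIdT_trace hN.2.2, maxEnt_trace hd]
      have hchoiM_tr : (choi1 M).trace = 1 := by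
        rw [choi1, tensorIdT_trace hM.2.2, maxEnt_trace hd]
      have hfvg := fvg hchoiN_psd hchoiN_tr hchoiM_psd hchoiM_tr
      have h1F : 1 - fidelity (choi1 N) (choi1 M) ≤ ε := by linarith
      have hbound : traceNorm (choi1 N - choi1 M) ≤ 2 * Real.sqrt ε := by
        calc traceNorm (choi1 N - choi1 M)
            ≤ 2 * Real.sqrt (1 - fidelity (choi1 N) (choi1 M)) := hfvg
          _ ≤ 2 * Real.sqrt ε := by
              have := Real.sqrt_le_sqrt h1F
              linarith
      calc traceNorm (tensorIdT (fun X => N X - M X) ρ)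
          ≤ (d : ℝ) * traceNorm (tensorIdT (fun X => N X - M X) (maxEntangled d d d)) := hkey
        _ = (d : ℝ) * traceNorm (choi1 N - choi1 M) := by rw [hJd]
        _ ≤ (d : ℝ) * (2 * Real.sqrt ε) :=
            mul_le_mul_of_nonneg_left hbound (Nat.cast_nonneg d)
        _ = 2 * ((d : ℝ) * Real.sqrt ε) := by ring
  linarith


end Statements

end DynEnt
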